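/- arXiv:1403.0079 — 5 statements merged into one kernel-verified Lean document; each statement's English description precedes it below -/
import Mathlib

section
/- Let s ≥ 1, let (σ,P) be a q-positive measure on [0,2π] in density form, and define r(n) = ∫₀^{2π} (cos(nt) + i·sin(nt)) • (P₁₁(t) + P₁₂(t)·j) dσ(t) for n ∈ ℤ. Then r is Hermitian, i.e., r(−n)* = r(n) for every n ∈ ℤ, where * denotes the quaternionic conjugate transpose. -/
noncomputable section

open MeasureTheory Matrix
open scoped ComplexOrder

abbrev Hq : Type := Quaternion ℝ

/-- The image of a complex number in the quaternions via ℂ = ℝ + ℝi. -/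
def Cq (z : ℂ) : Hq := ⟨z.re, z.im, 0, 0⟩

def qj : Hq := ⟨0, 0, 1, 0⟩

/-- cos (n t) + i sin (n t) as a quaternion. -/
def eint (n : ℤ) (t : ℝ) : Hq := ⟨Real.cos (n * t), Real.sin (n * t), 0, 0⟩

/-- Positive semidefiniteness for quaternionic matrices. -/
def QPosSemidef {m : Type*} [Fintype m] (M : Matrix m m Hq) : Prop :=
  M.conjTranspose = M ∧
    ∀ x : m → Hq, ∃ c : ℝ, 0 ≤ c ∧ dotProduct (star x) (M.mulVec x) = (c : Hq)

def qToeplitz {s : ℕ} (r : ℤ → Matrix (Fin s) (Fin s) Hq) (N : ℕ) :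
    Matrix (Fin (N+1) × Fin s) (Fin (N+1) × Fin s) Hq :=
  Matrix.of fun p q => r ((p.1 : ℤ) - (q.1 : ℤ)) p.2 q.2

def IsPosDefSeq {s : ℕ} (r : ℤ → Matrix (Fin s) (Fin s) Hq) : Prop :=
  ∀ N : ℕ, QPosSemidef (qToeplitz r N)

/-- A q-positive measure on [0,2π] in density form. -/
structure QPosDensity (s : ℕ) where
  σ : Measure ℝ
  P11 : ℝ → Matrix (Fin s) (Fin s) ℂ
  P12 : ℝ → Matrix (Fin s) (Fin s) ℂ
  P22 : ℝ → Matrix (Fin s) (Fin s) ℂ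
  finite : IsFiniteMeasure σ
  support : σ (Set.Icc (0:ℝ) (2*Real.pi))ᶜ = 0
  refl : Measure.map (fun t => 2*Real.pi - t) σ = σ
  integrable : ∀ i j, Integrable (fun t => P11 t i j) σ ∧
      Integrable (fun t => P12 t i j) σ ∧ Integrable (fun t => P22 t i j) σ
  posSemidef_ae : ∀ᵐ t ∂σ,
      (Matrix.fromBlocks (P11 t) (P12 t) (P12 t).conjTranspose (P22 t)).PosSemidef
  cond22 : ∀ᵐ t ∂σ, P22 t = (P11 (2*Real.pi - t)).map (starRingEnd ℂ)
  cond12 : ∀ᵐ t ∂σ, P12 t = - (P12 (2*Real.pi - t)).transpose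

/-- The moment of a q-positive density measure, entrywise Bochner integral. -/
def QPosDensity.moment {s : ℕ} (μ : QPosDensity s) (n : ℤ) :
    Matrix (Fin s) (Fin s) Hq :=
  Matrix.of fun i j =>
    ∫ t in Set.Icc (0:ℝ) (2*Real.pi),
      eint n t * (Cq (μ.P11 t i j) + Cq (μ.P12 t i j) * qj) ∂μ.σ

def qi : Hq := ⟨0, 1, 0, 0⟩

lemma continuous_Cq : Continuous Cq := by
  have h : Cq = fun z : ℂ => ((z.re : ℝ) : Hq) + ((z.im : ℝ) : Hq) * qi := by
    funext z; ext <;> simp <;> simp [Cq, qi]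
  rw [h]
  exact ((Quaternion.continuous_coe).comp Complex.continuous_re).add
    (((Quaternion.continuous_coe).comp Complex.continuous_im).mul continuous_const)

def CqL : ℂ →L[ℝ] Hq where
  toFun := Cq
  map_add' := by intros; ext <;> simp <;> simp [Cq]
  map_smul' := by intros; ext <;> simp <;> simp [Cq]
  cont := continuous_Cq

lemma CqL_apply (z : ℂ) : CqL z = Cq z := rfl

lemma eint_eq (n : ℤ) (t : ℝ) : eint n t = Cq (Complex.exp ((n * t : ℝ) * Complex.I)) := by
  ext <;> simp [eint, Cq, ← Complex.ofReal_mul,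
    Complex.exp_ofReal_mul_I_re, Complex.exp_ofReal_mul_I_im]

lemma continuous_eint (n : ℤ) : Continuous (eint n) := by
  show Continuous fun t => eint n t
  simp only [eint_eq]
  exact continuous_Cq.comp (Complex.continuous_exp.comp (by continuity))

lemma norm_eint (n : ℤ) (t : ℝ) : ‖eint n t‖ = 1 := by
  have h : Quaternion.normSq (eint n t) = 1 := by
    rw [Quaternion.normSq_def']
    simp only [eint]
    have := Real.sin_sq_add_cos_sq ((n : ℝ) * t)
    nlinarith [this]
  have h2 := Quaternion.normSq_eq_norm_mul_self (eint n t)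
  nlinarith [norm_nonneg (eint n t)]

lemma eint_reflect (n : ℤ) (t : ℝ) : eint n (2*Real.pi - t) = eint (-n) t := by
  have h1 : (n:ℝ) * (2*Real.pi - t) = (n:ℝ)*(2*Real.pi) - (n:ℝ)*t := by ring
  ext <;> push_cast <;>
    simp [eint, h1, Real.cos_int_mul_two_pi_sub, Real.sin_int_mul_two_pi_sub, neg_mul]

lemma eint_neg_eq (n : ℤ) (t : ℝ) :
    eint (-n) t = ⟨Real.cos ((n:ℝ)*t), -Real.sin ((n:ℝ)*t), 0, 0⟩ := by
  ext <;> push_cast <;> simp [eint, neg_mul]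

lemma Cq_neg (z : ℂ) : Cq (-z) = - Cq z := by ext <;> simp <;> simp [Cq]

instance : StarModule ℝ Hq := ⟨fun r q => by ext <;> simp⟩

open ComplexConjugate in
lemma star_mul_key (n : ℤ) (t : ℝ) (z w : ℂ) :
    star (eint (-n) t * (Cq z + Cq w * qj)) =
      eint n t * Cq (conj z) - eint (-n) t * (Cq w * qj) := by
  ext <;> simp <;> simp [eint, Cq, qj] <;> ring


/-- the moments of a q-positive measure form a Hermitian sequence. -/
theorem qPosDensity_moment_hermitian {s : ℕ} (hs : 1 ≤ s) (μ : QPosDensity s)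
    (r : ℤ → Matrix (Fin s) (Fin s) Hq) (hr : ∀ n : ℤ, r n = μ.moment n) :
    ∀ n : ℤ, (r (-n)).conjTranspose = r n := by
  intro n
  haveI := μ.finite
  have hres : μ.σ.restrict (Set.Icc (0:ℝ) (2*Real.pi)) = μ.σ :=
    Measure.restrict_eq_self_of_ae_mem (by
      rw [MeasureTheory.ae_iff]
      simpa [Set.compl_def] using μ.support)
  have hint : ∀ (m : ℤ) (g : ℝ → ℂ), Integrable g μ.σ →
      Integrable (fun t => eint m t * Cq (g t)) μ.σ := by
    intro m g hg
    have h1 : Integrable (fun t => Cq (g t)) μ.σ := by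
      simpa only [CqL_apply] using CqL.integrable_comp hg
    exact h1.bdd_mul (continuous_eint m).aestronglyMeasurable
      (c := 1) (ae_of_all _ fun t => (norm_eint m t).le)
  refine Matrix.ext fun i j => ?_
  simp only [hr, QPosDensity.moment, conjTranspose_apply, Matrix.of_apply, hres]
  -- integrability facts
  have hI11 : Integrable (fun t => eint (-n) t * Cq (μ.P11 t j i)) μ.σ :=
    hint _ _ (μ.integrable j i).1
  have hI12 : Integrable (fun t => eint (-n) t * (Cq (μ.P12 t j i) * qj)) μ.σ := by
    have := (hint (-n) _ (μ.integrable j i).2.1).mul_const qj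
    simpa only [mul_assoc] using this
  have hIsum : Integrable
      (fun t => eint (-n) t * (Cq (μ.P11 t j i) + Cq (μ.P12 t j i) * qj)) μ.σ := by
    refine (hI11.add hI12).congr (Filter.Eventually.of_forall fun t => ?_)
    simp [mul_add]
  have hstar : star (∫ t, eint (-n) t * (Cq (μ.P11 t j i) + Cq (μ.P12 t j i) * qj) ∂μ.σ)
      = ∫ t, star (eint (-n) t * (Cq (μ.P11 t j i) + Cq (μ.P12 t j i) * qj)) ∂μ.σ := by
    have := ((starL' ℝ : Hq ≃L[ℝ] Hq).toContinuousLinearMap.integral_comp_comm hIsum).symm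
    simpa using this
  rw [hstar]
  have hkey : (fun t => star (eint (-n) t * (Cq (μ.P11 t j i) + Cq (μ.P12 t j i) * qj)))
      = fun t => eint n t * Cq ((starRingEnd ℂ) (μ.P11 t j i))
          - eint (-n) t * (Cq (μ.P12 t j i) * qj) := by
    funext t; exact star_mul_key n t _ _
  rw [hkey]
  have hIc : Integrable (fun t => eint n t * Cq ((starRingEnd ℂ) (μ.P11 t j i))) μ.σ :=
    hint _ _ (by
      simpa using Complex.conjCLE.toContinuousLinearMap.integrable_comp (μ.integrable j i).1)
  rw [integral_sub hIc hI12]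
  -- first piece
  have hae1 : (fun t => eint n t * Cq ((starRingEnd ℂ) (μ.P11 t j i)))
      =ᵐ[μ.σ] fun t => eint n t * Cq (μ.P11 t i j) := by
    filter_upwards [μ.posSemidef_ae] with t ht
    have h := ht.isHermitian.apply (Sum.inl i) (Sum.inl j)
    simp only [Matrix.fromBlocks_apply₁₁] at h
    rw [show (starRingEnd ℂ) (μ.P11 t j i) = star (μ.P11 t j i) from rfl, h]
  rw [integral_congr_ae hae1]
  -- second piece: change of variables
  have hmap : ∫ t, eint (-n) t * (Cq (μ.P12 t j i) * qj) ∂μ.σ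
      = ∫ t, eint n t * (Cq (μ.P12 (2*Real.pi - t) j i) * qj) ∂μ.σ := by
    conv_lhs => rw [← μ.refl]
    rw [integral_map (by fun_prop) (by rw [μ.refl]; exact hI12.aestronglyMeasurable)]
    congr 1
    funext t
    rw [eint_reflect, neg_neg]
  rw [hmap]
  have hae2 : (fun t => eint n t * (Cq (μ.P12 (2*Real.pi - t) j i) * qj))
      =ᵐ[μ.σ] fun t => -(eint n t * (Cq (μ.P12 t i j) * qj)) := by
    filter_upwards [μ.cond12] with t ht
    have h : μ.P12 (2*Real.pi - t) j i = - μ.P12 t i j := by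
      have h2 := congrFun (congrFun ht i) j
      simp only [Matrix.neg_apply, Matrix.transpose_apply] at h2
      rw [h2]; ring
    rw [h, Cq_neg]
    simp [mul_neg, neg_mul]
  rw [integral_congr_ae hae2, integral_neg, sub_neg_eq_add]
  have hBn : Integrable (fun t => eint n t * (Cq (μ.P12 t i j) * qj)) μ.σ := by
    have := (hint n _ (μ.integrable i j).2.1).mul_const qj
    simpa only [mul_assoc] using this
  have hAn : Integrable (fun t => eint n t * Cq (μ.P11 t i j)) μ.σ :=
    hint _ _ (μ.integrable i j).1
  rw [← integral_add hAn hBn]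
  simp only [mul_add]
end
end

section
/- (Carathéodory extension theorem over the quaternions.) Let s ≥ 1, N ≥ 0, and let r : {−N,…,N} → ℍ^{s×s} be such that the block Toeplitz matrix T_N = (r(j−ℓ))_{j,ℓ=0}^{N} ∈ ℍ^{(N+1)s×(N+1)s} is positive semidefinite. Then there exists a positive definite function r̃ : ℤ → ℍ^{s×s} such that r̃(n) = r(n) for all n with |n| ≤ N. -/
noncomputable section

open MeasureTheory Matrix
open scoped ComplexOrder

/-! ### Auxiliary machinery for the proof -/

section QCaratheodoryAux

open Finset

lemma qre_sum {ι : Type*} (s : Finset ι) (f : ι → Hq) :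
    (∑ i ∈ s, f i).re = ∑ i ∈ s, (f i).re :=
  map_sum (QuaternionAlgebra.reₗ (R := ℝ) (c₁ := -1) (c₂ := 0) (c₃ := -1)) _ _

lemma qre_comm (p q : Hq) : (p * q).re = (q * p).re := by
  simp [Quaternion.re_mul]; ring

lemma qinner_eq_dot {ι : Type} [Fintype ι] (x y : ι → Hq) :
    (@inner ℝ (PiLp 2 (fun _ : ι => Hq)) _ (WithLp.toLp 2 x) (WithLp.toLp 2 y)) = (star x ⬝ᵥ y).re := by
  rw [PiLp.inner_apply, dotProduct, qre_sum]
  refine Finset.sum_congr rfl fun i _ => ?_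
  rw [Quaternion.inner_def, qre_comm, Pi.star_apply]
  simp [Quaternion.re_mul]
  ring

/-- Solvability of `C *ᵥ k = d` for hermitian quaternionic `C`
when `d` is re-orthogonal to the kernel of `C`. -/
lemma qsolv {ι : Type} [Fintype ι] [DecidableEq ι] (C : Matrix ι ι Hq) (hC : Cᴴ = C)
    (d : ι → Hq) (hd : ∀ y, C *ᵥ y = 0 → (star y ⬝ᵥ d).re = 0) : ∃ k, C *ᵥ k = d := by
  classical
  set V := PiLp 2 (fun _ : ι => Hq) with hV
  let T : V →ₗ[ℝ] V :=
    { toFun := fun x => WithLp.toLp 2 (C *ᵥ x.ofLp)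
      map_add' := fun x y => congrArg (WithLp.toLp 2) (Matrix.mulVec_add C x.ofLp y.ofLp)
      map_smul' := fun t x => by
        refine congrArg (WithLp.toLp 2) ?_
        funext i
        show (C *ᵥ (t • x.ofLp)) i = t • (C *ᵥ x.ofLp) i
        simp only [Matrix.mulVec, dotProduct, Finset.smul_sum]
        refine Finset.sum_congr rfl fun j _ => ?_
        rw [show (t • x.ofLp) j = t • (x.ofLp j) from rfl, mul_smul_comm] }
  have hsym : ∀ x y : V, (@inner ℝ V _ (T x) y) = @inner ℝ V _ x (T y) := by
    intro x y
    show (@inner ℝ (PiLp 2 (fun _ : ι => Hq)) _ (WithLp.toLp 2 (C *ᵥ x.ofLp)) (WithLp.toLp 2 y.ofLp))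
        = @inner ℝ (PiLp 2 (fun _ : ι => Hq)) _ (WithLp.toLp 2 x.ofLp) (WithLp.toLp 2 (C *ᵥ y.ofLp))
    rw [qinner_eq_dot, qinner_eq_dot, star_mulVec, hC, ← dotProduct_mulVec]
  have hrange : LinearMap.range T = (LinearMap.ker T)ᗮ := by
    have hle : LinearMap.range T ≤ (LinearMap.ker T)ᗮ := by
      rintro _ ⟨x, rfl⟩
      rw [Submodule.mem_orthogonal]
      intro u hu
      rw [real_inner_comm, hsym]
      rw [LinearMap.mem_ker] at hu
      rw [hu, inner_zero_right]
    refine Submodule.eq_of_le_of_finrank_eq hle ?_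
    have h1 := LinearMap.finrank_range_add_finrank_ker T
    have h2 := Submodule.finrank_add_finrank_orthogonal (𝕜 := ℝ) (LinearMap.ker T)
    omega
  have hdmem : (show V from WithLp.toLp 2 d) ∈ (LinearMap.ker T)ᗮ := by
    rw [Submodule.mem_orthogonal]
    intro u hu
    rw [LinearMap.mem_ker] at hu
    show @inner ℝ V _ (WithLp.toLp 2 u.ofLp) (WithLp.toLp 2 d) = 0
    rw [qinner_eq_dot]
    exact hd u.ofLp (congrArg WithLp.ofLp hu)
  rw [← hrange] at hdmem
  obtain ⟨k, hk⟩ := hdmem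
  exact ⟨k.ofLp, congrArg WithLp.ofLp hk⟩

lemma dot_sum {n : ℕ} {ι : Type*} (s : Finset ι) (v : Fin n → Hq) (f : ι → Fin n → Hq) :
    v ⬝ᵥ (∑ i ∈ s, f i) = ∑ i ∈ s, v ⬝ᵥ f i := by
  simp only [dotProduct, Finset.sum_apply, Finset.mul_sum]
  rw [Finset.sum_comm]

lemma star_qdot {n : ℕ} (A : Matrix (Fin n) (Fin n) Hq) (u v : Fin n → Hq) :
    star (star u ⬝ᵥ (A *ᵥ v)) = star v ⬝ᵥ (Aᴴ *ᵥ u) := by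
  rw [Matrix.star_dotProduct, star_star, star_mulVec, ← dotProduct_mulVec]

lemma mulVec_rsmul {n : ℕ} (A : Matrix (Fin n) (Fin n) Hq) (t : ℝ) (v : Fin n → Hq) :
    A *ᵥ (t • v) = t • (A *ᵥ v) := by
  funext a
  simp only [Matrix.mulVec, dotProduct, Pi.smul_apply, mul_smul_comm, Finset.smul_sum]

lemma real_trick (b e : ℝ) (h : ∀ t : ℝ, 0 ≤ 2*t*b + t^2*e) : b = 0 := by
  by_contra hb
  have h2 : (0:ℝ) < |e| + 2 := by positivity
  set u : ℝ := (|e| + 2)⁻¹ with hu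
  have hu0 : 0 < u := by positivity
  have hue : u * e < 1 := by
    rw [hu, inv_mul_eq_div, div_lt_one h2]
    have := le_abs_self e; linarith
  have h3 := h (-b * u)
  have hb2 : 0 < b^2 := by positivity
  nlinarith [mul_pos hb2 hu0, mul_pos (mul_pos hb2 hu0) hu0]

/-- quadratic form of the Toeplitz matrix, in window language -/
def qf {s : ℕ} (r : ℤ → Matrix (Fin s) (Fin s) Hq) (a b : ℤ) (x : ℤ → Fin s → Hq) : Hq :=
  ∑ j ∈ Finset.Icc a b, ∑ l ∈ Finset.Icc a b, star (x j) ⬝ᵥ ((r (j - l)) *ᵥ (x l))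

lemma sum_Icc_zero {α : Type*} [AddCommMonoid α] (M : ℕ) (g : ℤ → α) :
    ∑ j ∈ Finset.Icc (0:ℤ) M, g j = ∑ k : Fin (M+1), g k := by
  rw [show Finset.Icc (0:ℤ) (M:ℤ) =
      Finset.map ⟨fun k : ℕ => (k:ℤ), fun a b h => by dsimp at h; omega⟩ (Finset.range (M+1)) from by
    ext n
    simp only [Finset.mem_Icc, Finset.mem_map, Finset.mem_range, Function.Embedding.coeFn_mk, DFunLike.coe]
    constructor
    · intro h; exact ⟨n.toNat, by omega, by omega⟩
    · rintro ⟨k, hk, rfl⟩; omega]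
  rw [Finset.sum_map, Fin.sum_univ_eq_sum_range (fun k => g (k:ℤ)) (M+1)]
  rfl

lemma sum_Icc_one {α : Type*} [AddCommMonoid α] (M : ℕ) (g : ℤ → α) :
    ∑ j ∈ Finset.Icc (1:ℤ) M, g j = ∑ k : Fin M, g ((k:ℤ)+1) := by
  rw [show Finset.Icc (1:ℤ) (M:ℤ) =
      Finset.map ⟨fun k : ℕ => (k:ℤ)+1, fun a b h => by dsimp at h; omega⟩ (Finset.range M) from by
    ext n
    simp only [Finset.mem_Icc, Finset.mem_map, Finset.mem_range, Function.Embedding.coeFn_mk, DFunLike.coe]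
    constructor
    · intro h; exact ⟨(n-1).toNat, by omega, by omega⟩
    · rintro ⟨k, hk, rfl⟩; omega]
  rw [Finset.sum_map, Fin.sum_univ_eq_sum_range (fun k => g ((k:ℤ)+1)) M]
  rfl

lemma qf_window {s : ℕ} (r : ℤ → Matrix (Fin s) (Fin s) Hq) (M : ℕ) (x : ℤ → Fin s → Hq) :
    qf r 0 M x = star (fun p : Fin (M+1) × Fin s => x p.1 p.2) ⬝ᵥ
      ((qToeplitz r M) *ᵥ (fun p : Fin (M+1) × Fin s => x p.1 p.2)) := by
  rw [dotProduct]
  rw [Fintype.sum_prod_type]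
  rw [qf, sum_Icc_zero]
  refine Finset.sum_congr rfl fun j _ => ?_
  rw [sum_Icc_zero (M := M) (g := fun l => star (x (j:ℤ)) ⬝ᵥ (r ((j:ℤ) - l) *ᵥ x l))]
  simp only [dotProduct, Matrix.mulVec, Pi.star_apply, qToeplitz, Matrix.of_apply,
    Fintype.sum_prod_type, Finset.mul_sum]
  rw [Finset.sum_comm]


lemma qf_congr {s : ℕ} (r : ℤ → Matrix (Fin s) (Fin s) Hq) (a b : ℤ) {x y : ℤ → Fin s → Hq}
    (h : ∀ n, a ≤ n → n ≤ b → x n = y n) : qf r a b x = qf r a b y := by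
  refine Finset.sum_congr rfl fun j hj => Finset.sum_congr rfl fun l hl => ?_
  rw [Finset.mem_Icc] at hj hl
  rw [h j hj.1 hj.2, h l hl.1 hl.2]

lemma qf_congr_r {s : ℕ} {r r' : ℤ → Matrix (Fin s) (Fin s) Hq} (a b : ℤ)
    (h : ∀ n : ℤ, n.natAbs ≤ (b - a).natAbs → r n = r' n) (x : ℤ → Fin s → Hq) :
    qf r a b x = qf r' a b x := by
  refine Finset.sum_congr rfl fun j hj => Finset.sum_congr rfl fun l hl => ?_
  rw [Finset.mem_Icc] at hj hl
  rw [h (j - l) (by omega)]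

lemma qf_shift {s : ℕ} (r : ℤ → Matrix (Fin s) (Fin s) Hq) (a b t : ℤ) (x : ℤ → Fin s → Hq) :
    qf r (a+t) (b+t) x = qf r a b (fun n => x (n + t)) := by
  unfold qf
  rw [show Finset.Icc (a+t) (b+t) = Finset.map (addRightEmbedding t) (Finset.Icc a b) from by
    rw [Finset.map_add_right_Icc]]
  rw [Finset.sum_map]
  refine Finset.sum_congr rfl fun j hj => ?_
  rw [Finset.sum_map]
  refine Finset.sum_congr rfl fun l hl => ?_
  have e : j + t - (l + t) = j - l := by omega
  simp [addRightEmbedding, e]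

/-- QPosSemidef in window language -/
lemma qpos_iff {s : ℕ} (r : ℤ → Matrix (Fin s) (Fin s) Hq) (M : ℕ) :
    QPosSemidef (qToeplitz r M) ↔ ((qToeplitz r M).conjTranspose = qToeplitz r M ∧
      ∀ x : ℤ → Fin s → Hq, ∃ c : ℝ, 0 ≤ c ∧ qf r 0 M x = (c : Hq)) := by
  constructor
  · rintro ⟨h1, h2⟩
    refine ⟨h1, fun x => ?_⟩
    obtain ⟨c, hc, hcx⟩ := h2 (fun p => x p.1 p.2)
    exact ⟨c, hc, by rw [qf_window]; exact hcx⟩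
  · rintro ⟨h1, h2⟩
    refine ⟨h1, fun x => ?_⟩
    set xZ : ℤ → Fin s → Hq := fun n i =>
      if h : 0 ≤ n ∧ n ≤ (M:ℤ) then x (⟨n.toNat, by omega⟩, i) else 0 with hxZ
    obtain ⟨c, hc, hcx⟩ := h2 xZ
    have hX : (fun p : Fin (M+1) × Fin s => xZ (p.1 : ℤ) p.2) = x := by
      funext p
      simp only [hxZ]
      rw [dif_pos ⟨Int.natCast_nonneg _, by exact_mod_cast Nat.le_of_lt_succ p.1.2⟩]
      simp
    rw [qf_window, hX] at hcx
    exact ⟨c, hc, hcx⟩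

lemma herm_of {s M : ℕ} {r : ℤ → Matrix (Fin s) (Fin s) Hq}
    (h : (qToeplitz r M).conjTranspose = qToeplitz r M) :
    ∀ n : ℤ, n.natAbs ≤ M → (r n).conjTranspose = r (-n) := by
  intro n hn
  have key : ∀ (j l : Fin (M+1)) (a b : Fin s),
      star (r ((l:ℤ) - j) b a) = r ((j:ℤ) - (l:ℤ)) a b := by
    intro j l a b
    have := congrFun (congrFun h ((j, a))) ((l, b))

    rwa [Matrix.conjTranspose_apply] at this
  funext a b
  rw [Matrix.conjTranspose_apply]
  rcases le_or_gt 0 n with hn0 | hn0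
  · have := key ⟨0, by omega⟩ ⟨n.toNat, by omega⟩ a b
    simp only [] at this
    rw [show ((⟨n.toNat, by omega⟩ : Fin (M+1)) : ℤ) - ((⟨0, by omega⟩ : Fin (M+1)) : ℤ) = n
      from by simp; omega] at this
    rw [show ((⟨0, by omega⟩ : Fin (M+1)) : ℤ) - ((⟨n.toNat, by omega⟩ : Fin (M+1)) : ℤ) = -n
      from by simp; omega] at this
    exact this
  · have := key ⟨(-n).toNat, by omega⟩ ⟨0, by omega⟩ a b
    rw [show ((⟨0, by omega⟩ : Fin (M+1)) : ℤ) - ((⟨(-n).toNat, by omega⟩ : Fin (M+1)) : ℤ) = n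
      from by simp; omega] at this
    rw [show ((⟨(-n).toNat, by omega⟩ : Fin (M+1)) : ℤ) - ((⟨0, by omega⟩ : Fin (M+1)) : ℤ) = -n
      from by simp; omega] at this
    exact this

lemma herm_toep {s M : ℕ} {r : ℤ → Matrix (Fin s) (Fin s) Hq}
    (h : ∀ n : ℤ, n.natAbs ≤ M → (r n).conjTranspose = r (-n)) :
    (qToeplitz r M).conjTranspose = qToeplitz r M := by
  funext p q
  rw [Matrix.conjTranspose_apply]
  show star (r ((q.1:ℤ) - (p.1:ℤ)) q.2 p.2) = r ((p.1:ℤ) - (q.1:ℤ)) p.2 q.2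
  have := h ((q.1:ℤ) - (p.1:ℤ)) (by have := p.1.2; have := q.1.2; omega)
  have e2 := congrFun (congrFun this p.2) q.2
  rw [Matrix.conjTranspose_apply] at e2
  rw [e2]
  congr 1
  omega

lemma qf_trunc {s : ℕ} (r : ℤ → Matrix (Fin s) (Fin s) Hq) (K M : ℕ) (hK : K ≤ M)
    (x : ℤ → Fin s → Hq) :
    qf r 0 M (fun n i => if n ≤ (K:ℤ) then x n i else 0) = qf r 0 K x := by
  unfold qf
  have hsub : Finset.Icc (0:ℤ) K ⊆ Finset.Icc (0:ℤ) M := by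
    intro n hn; rw [Finset.mem_Icc] at *; omega
  have hz : ∀ n : ℤ, ¬ (n ≤ (K:ℤ)) → (fun i => if n ≤ (K:ℤ) then x n i else 0)
      = (0 : Fin s → Hq) := fun n hn => funext fun i => by rw [if_neg hn]; rfl
  have he : ∀ n : ℤ, n ≤ (K:ℤ) → (fun i => if n ≤ (K:ℤ) then x n i else 0) = x n :=
    fun n hn => funext fun i => if_pos hn
  rw [← Finset.sum_subset hsub]
  · refine Finset.sum_congr rfl fun j hj => ?_
    rw [Finset.mem_Icc] at hj
    rw [← Finset.sum_subset hsub]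
    · refine Finset.sum_congr rfl fun l hl => ?_
      rw [Finset.mem_Icc] at hl
      simp only [he j hj.2, he l hl.2]
    · intro l hlM hl
      rw [Finset.mem_Icc] at hlM
      simp only [Finset.mem_Icc, not_and, not_le] at hl
      simp [hz l (by have := hl hlM.1; omega)]
  · intro j hjM hj
    rw [Finset.mem_Icc] at hjM
    simp only [Finset.mem_Icc, not_and, not_le] at hj
    simp [hz j (by have := hj hjM.1; omega)]

lemma qpos_restrict {s M : ℕ} {r : ℤ → Matrix (Fin s) (Fin s) Hq}
    (h : QPosSemidef (qToeplitz r M)) (K : ℕ) (hK : K ≤ M) :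
    QPosSemidef (qToeplitz r K) := by
  rw [qpos_iff] at h ⊢
  obtain ⟨h1, h2⟩ := h
  have herm := herm_of h1
  constructor
  · exact herm_toep (fun n hn => herm n (by omega))
  · intro x
    obtain ⟨c, hc, hcx⟩ := h2 (fun n i => if n ≤ (K:ℤ) then x n i else 0)
    rw [qf_trunc r K M hK] at hcx
    exact ⟨c, hc, hcx⟩

lemma sum_Icc_mid {α : Type*} [AddCommMonoid α] (M : ℕ) (g : ℤ → α) :
    ∑ j ∈ Finset.Icc (0:ℤ) ((M:ℤ)-1), g j = ∑ k : Fin M, g k := by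
  rw [show Finset.Icc (0:ℤ) ((M:ℤ)-1) =
      Finset.map ⟨fun k : ℕ => (k:ℤ), fun a b h => by dsimp at h; omega⟩ (Finset.range M) from by
    ext n
    simp only [Finset.mem_Icc, Finset.mem_map, Finset.mem_range, Function.Embedding.coeFn_mk, DFunLike.coe]
    constructor
    · intro h; exact ⟨n.toNat, by omega, by omega⟩
    · rintro ⟨k, hk, rfl⟩; omega]
  rw [Finset.sum_map, Fin.sum_univ_eq_sum_range (fun k => g (k:ℤ)) M]
  rfl

lemma qf_as_fin {s : ℕ} (r : ℤ → Matrix (Fin s) (Fin s) Hq) (M : ℕ) (x : ℤ → Fin s → Hq) :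
    qf r 0 M x = ∑ p : Fin (M+1), ∑ q : Fin (M+1),
      star (x p) ⬝ᵥ ((r ((p:ℤ) - (q:ℤ))) *ᵥ (x q)) := by
  unfold qf
  rw [sum_Icc_zero]
  exact Finset.sum_congr rfl fun p _ => by rw [sum_Icc_zero]

lemma qf_split {s : ℕ} (r : ℤ → Matrix (Fin s) (Fin s) Hq) (M : ℕ) (x : ℤ → Fin s → Hq) :
    qf r 0 M x = (∑ p : Fin M, ∑ q : Fin M, star (x p) ⬝ᵥ (r ((p:ℤ) - q) *ᵥ x q))
      + (∑ p : Fin M, star (x p) ⬝ᵥ (r ((p:ℤ) - M) *ᵥ x M))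
      + (∑ q : Fin M, star (x M) ⬝ᵥ (r ((M:ℤ) - q) *ᵥ x q))
      + star (x M) ⬝ᵥ (r 0 *ᵥ x M) := by
  unfold qf
  have hins : Finset.Icc (0:ℤ) (M:ℤ) = insert (M:ℤ) (Finset.Icc 0 ((M:ℤ)-1)) := by
    ext n; simp only [Finset.mem_Icc, Finset.mem_insert]; omega
  have hnm : (M:ℤ) ∉ Finset.Icc (0:ℤ) ((M:ℤ)-1) := by simp
  rw [hins, Finset.sum_insert hnm, Finset.sum_insert hnm]
  have hinner : ∀ j ∈ Finset.Icc (0:ℤ) ((M:ℤ)-1),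
      (∑ l ∈ insert (M:ℤ) (Finset.Icc 0 ((M:ℤ)-1)), star (x j) ⬝ᵥ (r (j - l) *ᵥ x l))
      = star (x j) ⬝ᵥ (r (j - M) *ᵥ x M)
        + ∑ l ∈ Finset.Icc 0 ((M:ℤ)-1), star (x j) ⬝ᵥ (r (j - l) *ᵥ x l) :=
    fun j _ => Finset.sum_insert hnm
  rw [Finset.sum_congr rfl hinner, Finset.sum_add_distrib]
  rw [sum_Icc_mid M (fun j => star (x j) ⬝ᵥ (r (j - M) *ᵥ x M)),
    sum_Icc_mid M (fun l => star (x (M:ℤ)) ⬝ᵥ (r ((M:ℤ) - l) *ᵥ x l)),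
    sum_Icc_mid M (fun j => ∑ l ∈ Finset.Icc 0 ((M:ℤ)-1), star (x j) ⬝ᵥ (r (j - l) *ᵥ x l))]
  have : ∀ k : Fin M, (∑ l ∈ Finset.Icc (0:ℤ) ((M:ℤ)-1), star (x (k:ℤ)) ⬝ᵥ (r ((k:ℤ) - l) *ᵥ x l))
      = ∑ q : Fin M, star (x (k:ℤ)) ⬝ᵥ (r ((k:ℤ) - (q:ℤ)) *ᵥ x q) :=
    fun k => sum_Icc_mid M _
  rw [Finset.sum_congr rfl (fun k _ => this k)]
  have hsub : (M:ℤ) - (M:ℤ) = 0 := by omega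
  rw [hsub]
  abel

lemma ext_step {s : ℕ} (M : ℕ) (r : ℤ → Matrix (Fin s) (Fin s) Hq)
    (h : QPosSemidef (qToeplitz r M)) :
    ∃ r' : ℤ → Matrix (Fin s) (Fin s) Hq,
      (∀ n : ℤ, n.natAbs ≤ M → r' n = r n) ∧ QPosSemidef (qToeplitz r' (M+1)) := by
  classical
  rw [qpos_iff] at h
  obtain ⟨h1, h2⟩ := h
  have herm := herm_of h1
  set C : Matrix (Fin M × Fin s) (Fin M × Fin s) Hq :=
    fun p q => r ((p.1:ℤ) - (q.1:ℤ)) p.2 q.2 with hCdef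
  have hC : Cᴴ = C := by
    funext p q
    rw [Matrix.conjTranspose_apply]
    show star (r ((q.1:ℤ) - (p.1:ℤ)) q.2 p.2) = r ((p.1:ℤ) - (q.1:ℤ)) p.2 q.2
    have e := herm ((q.1:ℤ) - (p.1:ℤ)) (by have := p.1.2; have := q.1.2; omega)
    have e2 := congrFun (congrFun e p.2) q.2
    rw [Matrix.conjTranspose_apply] at e2
    rw [e2]; congr 1; omega
  set d : Fin s → (Fin M × Fin s) → Hq := fun i p => r ((p.1:ℤ) - M) p.2 i with hddef
  have hsolv : ∀ i : Fin s, ∃ k, C *ᵥ k = d i := by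
    intro i
    apply qsolv C hC
    intro y hy
    set ζ : Fin s → Hq := Pi.single i 1 with hζ
    set yf : Fin M → Fin s → Hq := fun p b => y (p, b) with hyf
    have hrow : ∀ p : Fin M, (∑ q : Fin M, r ((p:ℤ) - (q:ℤ)) *ᵥ yf q) = 0 := by
      intro p; funext a
      have h0 := congrFun hy (p, a)
      simp only [Matrix.mulVec, dotProduct, Fintype.sum_prod_type, hCdef, Pi.zero_apply] at h0
      rw [Finset.sum_apply]
      simp only [Matrix.mulVec, dotProduct, hyf, Pi.zero_apply]
      exact h0
    have hsum_d : (∑ p : Fin M, star (yf p) ⬝ᵥ (r ((p:ℤ) - M) *ᵥ ζ)) = star y ⬝ᵥ d i := by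
      rw [show star y ⬝ᵥ d i = ∑ p : Fin M, ∑ a : Fin s, star (y (p,a)) * d i (p,a) from by
        rw [dotProduct, Fintype.sum_prod_type]; rfl]
      refine Finset.sum_congr rfl fun p _ => ?_
      rw [dotProduct]
      refine Finset.sum_congr rfl fun a _ => ?_
      simp only [hyf, hζ, hddef, Matrix.mulVec_single_one, Matrix.col_apply, Pi.star_apply, mul_one]
    have key : ∀ t : ℝ, 0 ≤ 2*t*((star y ⬝ᵥ d i).re) + t^2*((star ζ ⬝ᵥ (r 0 *ᵥ ζ)).re) := by
      intro t
      set xt : ℤ → Fin s → Hq := fun n b =>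
        if n = (M:ℤ) then (t • ζ) b
        else if h' : 0 ≤ n ∧ n < (M:ℤ) then y (⟨n.toNat, by omega⟩, b) else 0 with hxt
      obtain ⟨c, hc, hqf⟩ := h2 xt
      have hxM : xt (M:ℤ) = t • ζ := funext fun b => if_pos rfl
      have hxp : ∀ p : Fin M, xt (p:ℤ) = yf p := by
        intro p; funext b
        simp only [hxt]
        rw [if_neg (by have := p.2; omega),
          dif_pos ⟨Int.natCast_nonneg _, by exact_mod_cast p.2⟩]
        simp [hyf]
      have hstsm : star (t • ζ) = t • star ζ := by
        funext b; simp
      rw [qf_split] at hqf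
      have e1 : (∑ p : Fin M, ∑ q : Fin M,
          star (xt (p:ℤ)) ⬝ᵥ (r ((p:ℤ)-(q:ℤ)) *ᵥ xt (q:ℤ))) = 0 := by
        refine Finset.sum_eq_zero fun p _ => ?_
        have hpt : ∀ q : Fin M, star (xt (p:ℤ)) ⬝ᵥ (r ((p:ℤ)-(q:ℤ)) *ᵥ xt (q:ℤ))
            = star (yf p) ⬝ᵥ (r ((p:ℤ)-(q:ℤ)) *ᵥ yf q) := fun q => by rw [hxp p, hxp q]
        rw [Finset.sum_congr rfl fun q _ => hpt q, ← dot_sum, hrow p, dotProduct_zero]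
      have e2 : (∑ p : Fin M, star (xt (p:ℤ)) ⬝ᵥ (r ((p:ℤ) - M) *ᵥ xt (M:ℤ)))
          = t • (star y ⬝ᵥ d i) := by
        have hpt : ∀ p : Fin M, star (xt (p:ℤ)) ⬝ᵥ (r ((p:ℤ) - M) *ᵥ xt (M:ℤ))
            = t • (star (yf p) ⬝ᵥ (r ((p:ℤ) - M) *ᵥ ζ)) := fun p => by
          rw [hxp p, hxM, mulVec_rsmul, dotProduct_smul]
        rw [Finset.sum_congr rfl fun p _ => hpt p, ← Finset.smul_sum, hsum_d]
      have e3 : (∑ q : Fin M, star (xt (M:ℤ)) ⬝ᵥ (r ((M:ℤ) - q) *ᵥ xt (q:ℤ)))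
          = t • star (star y ⬝ᵥ d i) := by
        have hpt : ∀ q : Fin M, star (xt (M:ℤ)) ⬝ᵥ (r ((M:ℤ) - q) *ᵥ xt (q:ℤ))
            = t • (star ζ ⬝ᵥ (r ((M:ℤ) - q) *ᵥ yf q)) := fun q => by
          rw [hxp q, hxM, hstsm, smul_dotProduct]
        rw [Finset.sum_congr rfl fun q _ => hpt q, ← Finset.smul_sum]
        congr 1
        rw [← hsum_d, star_sum]
        refine Finset.sum_congr rfl fun q _ => ?_
        rw [star_qdot]
        have hh := herm ((q:ℤ) - (M:ℤ)) (by have := q.2; omega)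
        rw [hh, show -((q:ℤ)-(M:ℤ)) = (M:ℤ)-(q:ℤ) from by ring]
      have e4 : star (xt (M:ℤ)) ⬝ᵥ (r 0 *ᵥ xt (M:ℤ))
          = (t*t) • (star ζ ⬝ᵥ (r 0 *ᵥ ζ)) := by
        rw [hxM, hstsm, mulVec_rsmul, smul_dotProduct, dotProduct_smul, smul_smul]
      rw [e1, e2, e3, e4, zero_add] at hqf
      have hre := congrArg (fun q : Hq => q.re) hqf
      simp only [Quaternion.re_add, Quaternion.re_smul, Quaternion.re_star,
        Quaternion.re_coe, smul_eq_mul] at hre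
      nlinarith [hc, hre]
    exact real_trick _ _ key
  choose k hk using hsolv
  set K : Matrix (Fin M × Fin s) (Fin s) Hq := fun p i0 => k i0 p with hKdef
  have hCK : C * K = fun p i0 => d i0 p := by
    funext p i0
    rw [Matrix.mul_apply]
    exact congrFun (hk i0) p
  set B : Matrix (Fin s) (Fin M × Fin s) Hq := fun a q => r (-((q.1:ℤ)+1)) a q.2 with hBdef
  set X : Matrix (Fin s) (Fin s) Hq := B * K with hXdef
  set r' : ℤ → Matrix (Fin s) (Fin s) Hq :=
    fun n => if n = ((M:ℤ)+1) then Xᴴ else if n = -((M:ℤ)+1) then X else r n with hr'def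
  have hval : ∀ m : ℤ, r' m = if m = (M:ℤ)+1 then Xᴴ else if m = -((M:ℤ)+1) then X else r m :=
    fun m => by rw [hr'def]
  have hagree : ∀ n : ℤ, n.natAbs ≤ M → r' n = r n := by
    intro n hn
    rw [hval, if_neg (by omega), if_neg (by omega)]
  have herm' : ∀ n : ℤ, n.natAbs ≤ M+1 → (r' n)ᴴ = r' (-n) := by
    intro n hn
    rcases eq_or_ne n ((M:ℤ)+1) with rfl | hne1
    · rw [hval, hval, if_pos rfl, if_neg (by omega), if_pos rfl, conjTranspose_conjTranspose]
    rcases eq_or_ne n (-((M:ℤ)+1)) with rfl | hne2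
    · rw [neg_neg, hval, hval, if_neg hne1, if_pos rfl, if_pos rfl]
    · have hnM : n.natAbs ≤ M := by omega
      rw [hagree n hnM, hagree (-n) (by omega)]
      exact herm n hnM
  refine ⟨r', hagree, ?_⟩
  rw [qpos_iff]
  refine ⟨herm_toep herm', ?_⟩
  intro z
  set ζ : Fin s → Hq := z ((M:ℤ)+1) with hζdef
  set w : Fin M → Fin s → Hq := fun p b => (K *ᵥ ζ) (p, b) with hwdef
  set u : ℤ → Fin s → Hq := fun n b =>
    z n b + (if h' : 1 ≤ n ∧ n ≤ (M:ℤ) then w ⟨(n-1).toNat, by omega⟩ b else 0) with hudef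
  set v : ℤ → Fin s → Hq := fun n b =>
    if n = (M:ℤ) then ζ b
    else if h' : 0 ≤ n ∧ n < (M:ℤ) then -(w ⟨n.toNat, by omega⟩ b) else 0 with hvdef
  obtain ⟨c1, hc1, hq1⟩ := h2 u
  obtain ⟨c2, hc2, hq2⟩ := h2 v
  refine ⟨c1 + c2, by linarith, ?_⟩
  have R1fin : ∀ p : Fin M, (∑ q : Fin M, r ((p:ℤ) - (q:ℤ)) *ᵥ w q) = r ((p:ℤ) - M) *ᵥ ζ := by
    intro p; funext a
    rw [Finset.sum_apply]
    have hL : ∑ q : Fin M, (r ((p:ℤ)-(q:ℤ)) *ᵥ w q) a = (C *ᵥ (K *ᵥ ζ)) (p,a) := by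
      simp only [Matrix.mulVec, dotProduct, Fintype.sum_prod_type, hCdef, hwdef]
    rw [hL, Matrix.mulVec_mulVec, hCK]
    simp only [Matrix.mulVec, dotProduct, hddef]
  have R2fin : (∑ q : Fin M, r (-((q:ℤ)+1)) *ᵥ w q) = X *ᵥ ζ := by
    funext a
    rw [Finset.sum_apply]
    have hL : ∑ q : Fin M, (r (-((q:ℤ)+1)) *ᵥ w q) a = (B *ᵥ (K *ᵥ ζ)) a := by
      simp only [Matrix.mulVec, dotProduct, Fintype.sum_prod_type, hBdef, hwdef]
    rw [hL, Matrix.mulVec_mulVec, hXdef]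
  have claimA : ∀ p : Fin (M+1),
      r' ((p:ℤ) - ((M:ℤ)+1)) *ᵥ ζ = ∑ q : Fin M, r ((p:ℤ) - ((q:ℤ)+1)) *ᵥ w q := by
    refine Fin.cases ?_ ?_
    · simp only [Fin.val_zero, Nat.cast_zero, zero_sub]
      rw [hval, if_neg (by omega), if_pos rfl, ← R2fin]
    · intro p'
      have hcoe : ((p'.succ : Fin (M+1)) : ℤ) = (p':ℤ)+1 := by
        simp [Fin.val_succ]
      rw [hcoe, show (p':ℤ)+1 - ((M:ℤ)+1) = (p':ℤ) - M from by ring,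
        hagree _ (by have := p'.2; omega), ← R1fin p']
      refine Finset.sum_congr rfl fun q _ => ?_
      rw [show (p':ℤ)+1 - ((q:ℤ)+1) = (p':ℤ) - (q:ℤ) from by ring]
  set SW := ∑ p : Fin M, ∑ q : Fin M, star (w p) ⬝ᵥ (r ((p:ℤ) - (q:ℤ)) *ᵥ w q) with hSWdef
  set SA := ∑ p : Fin (M+1), ∑ q : Fin M,
    star (z (p:ℤ)) ⬝ᵥ (r ((p:ℤ) - ((q:ℤ)+1)) *ᵥ w q) with hSAdef
  set SB := ∑ p : Fin (M+1), ∑ q : Fin M,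
    star (w q) ⬝ᵥ (r (((q:ℤ)+1) - (p:ℤ)) *ᵥ z (p:ℤ)) with hSBdef
  set E0 := star ζ ⬝ᵥ (r 0 *ᵥ ζ) with hE0def
  have colA : (∑ p : Fin (M+1), star (z (p:ℤ)) ⬝ᵥ (r' ((p:ℤ) - ((M:ℤ)+1)) *ᵥ ζ)) = SA := by
    rw [hSAdef]
    refine Finset.sum_congr rfl fun p _ => ?_
    rw [claimA p, dot_sum]
  have rowA : (∑ q : Fin (M+1), star ζ ⬝ᵥ (r' (((M:ℤ)+1) - (q:ℤ)) *ᵥ z (q:ℤ))) = SB := by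
    have step1 : (∑ q : Fin (M+1), star ζ ⬝ᵥ (r' (((M:ℤ)+1) - (q:ℤ)) *ᵥ z (q:ℤ)))
        = star (∑ p : Fin (M+1), star (z (p:ℤ)) ⬝ᵥ (r' ((p:ℤ) - ((M:ℤ)+1)) *ᵥ ζ)) := by
      rw [star_sum]
      refine Finset.sum_congr rfl fun q _ => ?_
      rw [star_qdot, herm' ((q:ℤ) - ((M:ℤ)+1)) (by have := q.2; omega),
        show -((q:ℤ) - ((M:ℤ)+1)) = ((M:ℤ)+1) - (q:ℤ) from by ring]
    rw [step1, colA, hSAdef, hSBdef, star_sum]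
    refine Finset.sum_congr rfl fun p _ => ?_
    rw [star_sum]
    refine Finset.sum_congr rfl fun q _ => ?_
    rw [star_qdot, herm ((p:ℤ) - ((q:ℤ)+1)) (by have := p.2; have := q.2; omega),
      show -((p:ℤ) - ((q:ℤ)+1)) = ((q:ℤ)+1) - (p:ℤ) from by ring]
  have hzz : qf r' 0 M z = qf r 0 M z :=
    qf_congr_r 0 (M:ℤ) (fun n hn => hagree n (by simpa using hn)) z
  have hLHS : qf r' 0 ((M:ℤ)+1) z = qf r 0 M z + SA + SB + E0 := by
    have hsp := qf_split r' (M+1) z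
    rw [show ((M+1:ℕ):ℤ) = (M:ℤ)+1 from by push_cast; ring] at hsp
    rw [← qf_as_fin r' M z, ← hζdef] at hsp
    rw [hsp, hzz, colA, rowA, hagree 0 (by simp), hE0def]
  -- the u side
  set wQ : Fin (M+1) → Fin s → Hq :=
    fun p => (Fin.cases (0 : Fin s → Hq) (fun p' => w p') p) with hwQdef
  have hwQ0 : wQ 0 = 0 := rfl
  have hwQs : ∀ p' : Fin M, wQ p'.succ = w p' := fun _ => rfl
  have hsucc_coe : ∀ q' : Fin M, ((q'.succ : Fin (M+1)) : ℤ) = (q':ℤ)+1 := by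
    intro q'; simp [Fin.val_succ]
  have huval : ∀ p : Fin (M+1), u (p:ℤ) = z (p:ℤ) + wQ p := by
    refine Fin.cases ?_ ?_
    · funext b
      simp only [Fin.val_zero, Nat.cast_zero, hudef, hwQ0, Pi.add_apply, Pi.zero_apply]
      rw [dif_neg (by omega)]
    · intro p'
      funext b
      rw [hsucc_coe p', hwQs p']
      simp only [hudef, Pi.add_apply]
      rw [dif_pos ⟨by omega, by have := p'.2; omega⟩]
      congr 2
      · ext; simp
  have hU : qf r 0 M u = qf r 0 M z + SA + SB + SW := by
    rw [qf_as_fin]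
    have expand : ∀ p q : Fin (M+1), star (u (p:ℤ)) ⬝ᵥ (r ((p:ℤ)-(q:ℤ)) *ᵥ u (q:ℤ))
        = star (z (p:ℤ)) ⬝ᵥ (r ((p:ℤ)-(q:ℤ)) *ᵥ z (q:ℤ))
          + star (z (p:ℤ)) ⬝ᵥ (r ((p:ℤ)-(q:ℤ)) *ᵥ wQ q)
          + star (wQ p) ⬝ᵥ (r ((p:ℤ)-(q:ℤ)) *ᵥ z (q:ℤ))
          + star (wQ p) ⬝ᵥ (r ((p:ℤ)-(q:ℤ)) *ᵥ wQ q) := by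
      intro p q
      rw [huval p, huval q, star_add, Matrix.mulVec_add, add_dotProduct,
        dotProduct_add, dotProduct_add]
      abel
    rw [Finset.sum_congr rfl fun p _ => Finset.sum_congr rfl fun q _ => expand p q]
    simp only [Finset.sum_add_distrib]
    rw [← qf_as_fin r M z]
    have t2 : (∑ p : Fin (M+1), ∑ q : Fin (M+1),
        star (z (p:ℤ)) ⬝ᵥ (r ((p:ℤ)-(q:ℤ)) *ᵥ wQ q)) = SA := by
      rw [hSAdef]
      refine Finset.sum_congr rfl fun p _ => ?_
      rw [Fin.sum_univ_succ]
      simp only [hwQ0, Matrix.mulVec_zero, dotProduct_zero, zero_add]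
      refine Finset.sum_congr rfl fun q' _ => ?_
      rw [hwQs q', hsucc_coe q']
    have t3 : (∑ p : Fin (M+1), ∑ q : Fin (M+1),
        star (wQ p) ⬝ᵥ (r ((p:ℤ)-(q:ℤ)) *ᵥ z (q:ℤ))) = SB := by
      rw [hSBdef, Finset.sum_comm]
      refine Finset.sum_congr rfl fun q _ => ?_
      rw [Fin.sum_univ_succ]
      simp only [hwQ0, star_zero, zero_dotProduct, zero_add]
      refine Finset.sum_congr rfl fun p' _ => ?_
      rw [hwQs p', hsucc_coe p']
    have t4 : (∑ p : Fin (M+1), ∑ q : Fin (M+1),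
        star (wQ p) ⬝ᵥ (r ((p:ℤ)-(q:ℤ)) *ᵥ wQ q)) = SW := by
      rw [hSWdef, Fin.sum_univ_succ]
      simp only [hwQ0, star_zero, zero_dotProduct, Finset.sum_const_zero, zero_add]
      refine Finset.sum_congr rfl fun p' _ => ?_
      rw [Fin.sum_univ_succ]
      simp only [hwQ0, Matrix.mulVec_zero, dotProduct_zero, zero_add]
      refine Finset.sum_congr rfl fun q' _ => ?_
      rw [hwQs, hwQs, hsucc_coe p', hsucc_coe q',
        show (p':ℤ)+1 - ((q':ℤ)+1) = (p':ℤ) - (q':ℤ) from by ring]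
    rw [t2, t3, t4]
  -- the v side
  have hvM : v (M:ℤ) = ζ := funext fun b => if_pos rfl
  have hvp : ∀ p : Fin M, v (p:ℤ) = -(w p) := by
    intro p; funext b
    simp only [hvdef, Pi.neg_apply]
    rw [if_neg (by have := p.2; omega),
      dif_pos ⟨Int.natCast_nonneg _, by exact_mod_cast p.2⟩]
    congr 2
  have hSWstar : star SW = SW := by
    rw [hSWdef, star_sum]
    rw [Finset.sum_congr rfl fun p (_ : p ∈ Finset.univ) => star_sum _ _]
    rw [Finset.sum_comm]
    refine Finset.sum_congr rfl fun q _ => Finset.sum_congr rfl fun p _ => ?_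
    rw [star_qdot, herm ((p:ℤ) - (q:ℤ)) (by have := p.2; have := q.2; omega),
      show -((p:ℤ) - (q:ℤ)) = (q:ℤ) - (p:ℤ) from by ring]
  have hC1 : (∑ p : Fin M, star (w p) ⬝ᵥ (r ((p:ℤ) - M) *ᵥ ζ)) = SW := by
    rw [hSWdef]
    refine Finset.sum_congr rfl fun p _ => ?_
    rw [← R1fin p, dot_sum]
  have hC2 : (∑ q : Fin M, star ζ ⬝ᵥ (r ((M:ℤ) - (q:ℤ)) *ᵥ w q)) = SW := by
    have : (∑ q : Fin M, star ζ ⬝ᵥ (r ((M:ℤ) - (q:ℤ)) *ᵥ w q))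
        = star (∑ p : Fin M, star (w p) ⬝ᵥ (r ((p:ℤ) - M) *ᵥ ζ)) := by
      rw [star_sum]
      refine Finset.sum_congr rfl fun q _ => ?_
      rw [star_qdot, herm ((q:ℤ) - (M:ℤ)) (by have := q.2; omega),
        show -((q:ℤ) - (M:ℤ)) = (M:ℤ) - (q:ℤ) from by ring]
    rw [this, hC1, hSWstar]
  have hV : qf r 0 M v = SW - SW - SW + E0 := by
    rw [qf_split]
    rw [show (∑ p : Fin M, ∑ q : Fin M, star (v (p:ℤ)) ⬝ᵥ (r ((p:ℤ)-(q:ℤ)) *ᵥ v (q:ℤ))) = SW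
      from by
        rw [hSWdef]
        refine Finset.sum_congr rfl fun p _ => Finset.sum_congr rfl fun q _ => ?_
        rw [hvp p, hvp q, star_neg, neg_dotProduct, Matrix.mulVec_neg, dotProduct_neg, neg_neg]]
    rw [show (∑ p : Fin M, star (v (p:ℤ)) ⬝ᵥ (r ((p:ℤ) - M) *ᵥ v (M:ℤ))) = -SW from by
      rw [← hC1, ← Finset.sum_neg_distrib]
      refine Finset.sum_congr rfl fun p _ => ?_
      rw [hvp p, hvM, star_neg, neg_dotProduct]]
    rw [show (∑ q : Fin M, star (v (M:ℤ)) ⬝ᵥ (r ((M:ℤ) - (q:ℤ)) *ᵥ v (q:ℤ))) = -SW from by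
      rw [← hC2, ← Finset.sum_neg_distrib]
      refine Finset.sum_congr rfl fun q _ => ?_
      rw [hvp q, hvM, Matrix.mulVec_neg, dotProduct_neg]]
    rw [hvM, hE0def]
    abel
  have main : qf r' 0 ((M:ℤ)+1) z = qf r 0 M u + qf r 0 M v := by
    rw [hLHS, hU, hV]
    abel
  have hcast : ((M+1:ℕ):ℤ) = (M:ℤ)+1 := by push_cast; ring
  rw [hcast, main, hq1, hq2, Quaternion.coe_add]

noncomputable def extSeq {s : ℕ} (N : ℕ) (r : ℤ → Matrix (Fin s) (Fin s) Hq)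
    (hpos : QPosSemidef (qToeplitz r N)) :
    (k : ℕ) → {f : ℤ → Matrix (Fin s) (Fin s) Hq // QPosSemidef (qToeplitz f (N + k))}
  | 0 => ⟨r, hpos⟩
  | (k+1) =>
      let prev := extSeq N r hpos k
      ⟨Classical.choose (ext_step (N+k) prev.1 prev.2),
        (Classical.choose_spec (ext_step (N+k) prev.1 prev.2)).2⟩

lemma extSeq_agree {s : ℕ} (N : ℕ) (r : ℤ → Matrix (Fin s) (Fin s) Hq)
    (hpos : QPosSemidef (qToeplitz r N)) (k : ℕ) :
    ∀ n : ℤ, n.natAbs ≤ N + k → (extSeq N r hpos (k+1)).1 n = (extSeq N r hpos k).1 n := by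
  intro n hn
  have h := (Classical.choose_spec
    (ext_step (N+k) (extSeq N r hpos k).1 (extSeq N r hpos k).2)).1 n hn
  simpa [extSeq] using h

lemma extSeq_stable {s : ℕ} (N : ℕ) (r : ℤ → Matrix (Fin s) (Fin s) Hq)
    (hpos : QPosSemidef (qToeplitz r N)) (k k' : ℕ) (hkk' : k ≤ k') :
    ∀ n : ℤ, n.natAbs ≤ N + k → (extSeq N r hpos k').1 n = (extSeq N r hpos k).1 n := by
  induction k', hkk' using Nat.le_induction with
  | base => intro n _; rfl
  | succ m hm ih =>
      intro n hn
      rw [extSeq_agree N r hpos m n (by omega)]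
      exact ih n hn

end QCaratheodoryAux

/-- Carathéodory extension theorem over the quaternions. -/
theorem quaternionic_caratheodory_extension {s N : ℕ} (hs : 1 ≤ s)
    (r : ℤ → Matrix (Fin s) (Fin s) Hq)
    (hpos : QPosSemidef (qToeplitz r N)) :
    ∃ rt : ℤ → Matrix (Fin s) (Fin s) Hq,
      IsPosDefSeq rt ∧ ∀ n : ℤ, n.natAbs ≤ N → rt n = r n := by
  classical
  refine ⟨fun n => (extSeq N r hpos n.natAbs).1 n, ?_, ?_⟩
  · intro K
    have hagreeK : ∀ n : ℤ, n.natAbs ≤ K →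
        (extSeq N r hpos n.natAbs).1 n = (extSeq N r hpos K).1 n := by
      intro n hn
      have h1 : (extSeq N r hpos (max K n.natAbs)).1 n = (extSeq N r hpos K).1 n :=
        extSeq_stable N r hpos K (max K n.natAbs) (le_max_left _ _) n (by omega)
      have h2 : (extSeq N r hpos (max K n.natAbs)).1 n = (extSeq N r hpos n.natAbs).1 n :=
        extSeq_stable N r hpos n.natAbs (max K n.natAbs) (le_max_right _ _) n (by omega)
      rw [← h2, h1]
    have heq : qToeplitz (fun n => (extSeq N r hpos n.natAbs).1 n) K
        = qToeplitz (extSeq N r hpos K).1 K := by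
      funext p q
      simp only [qToeplitz, Matrix.of_apply]
      rw [hagreeK _ (by have := p.1.2; have := q.1.2; omega)]
    rw [heq]
    exact qpos_restrict (extSeq N r hpos K).2 K (by omega)
  · intro n hn
    have h := extSeq_stable N r hpos 0 n.natAbs (Nat.zero_le _) n (by omega)
    show (extSeq N r hpos n.natAbs).1 n = r n
    rw [h]
    rfl
end
end

section
/- (Douglas-type lemma over the quaternions.) Let A ∈ ℍ^{t×s} and B ∈ ℍ^{u×s}. Then B*B − A*A is positive semidefinite if and only if there exists G ∈ ℍ^{t×u} such that A = G·B (matrix product) and ‖G *ᵥ (B *ᵥ x)‖ ≤ ‖B *ᵥ x‖ for every x ∈ ℍ^s. Moreover, B*B = A*A if and only if there exists G ∈ ℍ^{t×u} with A = G·B and ‖G *ᵥ (B *ᵥ x)‖ = ‖B *ᵥ x‖ for every x ∈ ℍ^s. -/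
noncomputable section

open MeasureTheory Matrix
open scoped ComplexOrder

/-- Euclidean norm of a quaternionic vector. -/
def qVecNorm {m : Type*} [Fintype m] (v : m → Hq) : ℝ :=
  Real.sqrt (∑ i, ‖v i‖ ^ 2)



lemma qd_coe_sum {α : Type*} (s : Finset α) (f : α → ℝ) :
    ((∑ i ∈ s, f i : ℝ) : Hq) = ∑ i ∈ s, ((f i : ℝ) : Hq) :=
  map_sum (algebraMap ℝ Hq) f s

noncomputable def qd_mulVecLinOp {m n : ℕ} (M : Matrix (Fin m) (Fin n) Hq) :
    (Fin n → Hq) →ₗ[Hqᵐᵒᵖ] (Fin m → Hq) where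
  toFun := M.mulVec
  map_add' x y := M.mulVec_add x y
  map_smul' c x := by
    funext i
    simp only [Matrix.mulVec, dotProduct, Pi.smul_apply,
      MulOpposite.smul_eq_mul_unop, RingHom.id_apply]
    rw [Finset.sum_mul]
    exact Finset.sum_congr rfl fun j _ => (mul_assoc _ _ _).symm

lemma qd_quad_eq {m n : ℕ} (M : Matrix (Fin m) (Fin n) Hq) (x : Fin n → Hq) :
    dotProduct (star x) ((Mᴴ * M).mulVec x)
      = ((∑ i, ‖M.mulVec x i‖ ^ 2 : ℝ) : Hq) := by
  rw [← Matrix.mulVec_mulVec, Matrix.dotProduct_mulVec, ← Matrix.star_mulVec,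
    qd_coe_sum]
  simp only [dotProduct, Pi.star_apply, Quaternion.star_mul_self]
  refine Finset.sum_congr rfl fun i _ => ?_
  rw [Quaternion.normSq_eq_norm_mul_self, sq]

lemma qd_star_single {n : ℕ} (i : Fin n) (c : Hq) :
    star (Pi.single i c : Fin n → Hq) = Pi.single i (star c) := by
  funext k
  simp only [Pi.star_apply, Pi.single_apply, apply_ite (star : Hq → Hq), star_zero]

/-- Polarization: a hermitian quaternionic matrix with zero quadratic form is 0. -/
lemma qd_herm_quad_zero {n : ℕ} (M : Matrix (Fin n) (Fin n) Hq) (hM : Mᴴ = M)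
    (h : ∀ x : Fin n → Hq, dotProduct (star x) (M.mulVec x) = 0) :
    M = 0 := by
  have hdiag : ∀ i, M i i = 0 := by
    intro i
    have h1 := h (Pi.single i 1)
    rw [qd_star_single, Matrix.mulVec_single, star_one] at h1
    simpa [single_dotProduct] using h1
  refine Matrix.ext fun i j => ?_
  rw [Matrix.zero_apply]
  rcases eq_or_ne i j with rfl | hij
  · simpa using hdiag i
  · -- off-diagonal: use x = e_i + e_j • q with q = star (M i j)
    set q : Hq := star (M i j) with hq
    have h1 := h (Pi.single i 1 + Pi.single j q)
    have hval : ∀ (a b : Fin n) (c d : Hq),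
        dotProduct (star (Pi.single a c : Fin n → Hq))
          (M.mulVec (Pi.single b d)) = star c * (M a b * d) := by
      intro a b c d
      rw [qd_star_single, Matrix.mulVec_single]
      simp [single_dotProduct, mul_assoc]
    rw [star_add, Matrix.mulVec_add, dotProduct_add, add_dotProduct,
      add_dotProduct, hval, hval, hval, hval, hdiag, hdiag] at h1
    have hji : M j i = star (M i j) := by
      conv_lhs => rw [← hM]
      simp [Matrix.conjTranspose_apply]
    rw [hji] at h1
    have ha : M i j * star (M i j) = 0 := by
      have h2 : M i j * star (M i j) + M i j * star (M i j) = 0 := by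
        simpa [hq, star_star] using h1
      have h3 : (2 : Hq) * (M i j * star (M i j)) = 0 := by rw [two_mul]; exact h2
      rcases mul_eq_zero.mp h3 with h4 | h4
      · exfalso
        have h5 := congrArg QuaternionAlgebra.re h4
        rw [show (2:Hq) = 1 + 1 from one_add_one_eq_two.symm] at h5
        simp [show QuaternionAlgebra.re (1:Hq) = 1 from rfl,
          show QuaternionAlgebra.re (0:Hq) = 0 from rfl] at h5
      · exact h4
    rcases mul_eq_zero.mp ha with h4 | h4
    · exact h4
    · exact star_eq_zero.mp h4


lemma qd_exists_factor {t u s : ℕ} (A : Matrix (Fin t) (Fin s) Hq)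
    (B : Matrix (Fin u) (Fin s) Hq)
    (hker : ∀ x : Fin s → Hq, B.mulVec x = 0 → A.mulVec x = 0) :
    ∃ G : Matrix (Fin t) (Fin u) Hq,
      ∀ x : Fin s → Hq, G.mulVec (B.mulVec x) = A.mulVec x := by
  set f := qd_mulVecLinOp A with hf
  set g := qd_mulVecLinOp B with hg
  have hle : LinearMap.ker g ≤ LinearMap.ker f := by
    intro x hx
    rw [LinearMap.mem_ker] at hx ⊢
    exact hker x hx
  let φ : (LinearMap.range g) →ₗ[Hqᵐᵒᵖ] (Fin t → Hq) :=
    ((LinearMap.ker g).liftQ f hle).comp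
      (g.quotKerEquivRange.symm : (LinearMap.range g) →ₗ[Hqᵐᵒᵖ] _)
  obtain ⟨h, hh⟩ := LinearMap.exists_extend φ
  have key : ∀ x, h (g x) = f x := by
    intro x
    have m1 : g x ∈ LinearMap.range g := LinearMap.mem_range_self g x
    have e0 : h (g x) = φ ⟨g x, m1⟩ := by
      have := congrFun (congrArg (fun (z : _ →ₗ[Hqᵐᵒᵖ] _) => ⇑z) hh) ⟨g x, m1⟩
      simpa using this
    rw [e0]
    have e1 : (⟨g x, m1⟩ : LinearMap.range g)
        = g.quotKerEquivRange (Submodule.Quotient.mk x) := by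
      apply Subtype.ext
      rw [LinearMap.quotKerEquivRange_apply_mk]
    simp only [φ, LinearMap.comp_apply, e1, LinearEquiv.coe_coe,
      LinearEquiv.symm_apply_apply, Submodule.liftQ_apply]
  refine ⟨Matrix.of fun i j => h (Pi.single j 1) i, fun x => ?_⟩
  have hGy : ∀ y : Fin u → Hq,
      (Matrix.of fun i j => h (Pi.single j 1) i).mulVec y = h y := by
    intro y
    have hy : y = ∑ j, (MulOpposite.op (y j)) • Pi.single j (1:Hq) := by
      funext k
      simp only [Finset.sum_apply, Pi.smul_apply, MulOpposite.smul_eq_mul_unop,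
        MulOpposite.unop_op, Pi.single_apply, ite_mul, one_mul, zero_mul]
      rw [Finset.sum_ite_eq]
      simp
    conv_rhs => rw [hy]
    rw [map_sum]
    funext i
    rw [Finset.sum_apply]
    simp only [Matrix.mulVec, dotProduct, Matrix.of_apply]
    refine Finset.sum_congr rfl fun j _ => ?_
    rw [_root_.map_smul]
    simp [MulOpposite.smul_eq_mul_unop]
  rw [hGy]
  exact key x


lemma qd_qVecNorm_eq {m : Type*} [Fintype m] (v : m → Hq) :
    qVecNorm v = Real.sqrt (∑ i, ‖v i‖ ^ 2) := rfl

lemma qd_sum_sq_nonneg {m : Type*} [Fintype m] (v : m → Hq) :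
    0 ≤ ∑ i, ‖v i‖ ^ 2 :=
  Finset.sum_nonneg fun _ _ => sq_nonneg _

lemma qd_sq_of_qVecNorm_le {m m' : Type*} [Fintype m] [Fintype m'] {v : m → Hq} {w : m' → Hq}
    (h : qVecNorm v ≤ qVecNorm w) : ∑ i, ‖v i‖ ^ 2 ≤ ∑ i, ‖w i‖ ^ 2 := by
  have h1 : Real.sqrt (∑ i, ‖v i‖ ^ 2) ≤ Real.sqrt (∑ i, ‖w i‖ ^ 2) := h
  calc ∑ i, ‖v i‖ ^ 2 = Real.sqrt (∑ i, ‖v i‖ ^ 2) ^ 2 :=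
        (Real.sq_sqrt (qd_sum_sq_nonneg v)).symm
    _ ≤ Real.sqrt (∑ i, ‖w i‖ ^ 2) ^ 2 :=
        pow_le_pow_left₀ (Real.sqrt_nonneg _) h1 2
    _ = ∑ i, ‖w i‖ ^ 2 := Real.sq_sqrt (qd_sum_sq_nonneg w)

lemma qd_sq_of_qVecNorm_eq {m m' : Type*} [Fintype m] [Fintype m'] {v : m → Hq} {w : m' → Hq}
    (h : qVecNorm v = qVecNorm w) : ∑ i, ‖v i‖ ^ 2 = ∑ i, ‖w i‖ ^ 2 :=
  le_antisymm (qd_sq_of_qVecNorm_le h.le) (qd_sq_of_qVecNorm_le h.ge)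

/-- Douglas-type lemma over the quaternions. -/
theorem quaternionic_douglas {t u s : ℕ}
    (A : Matrix (Fin t) (Fin s) Hq) (B : Matrix (Fin u) (Fin s) Hq) :
    (QPosSemidef (B.conjTranspose * B - A.conjTranspose * A) ↔
      ∃ G : Matrix (Fin t) (Fin u) Hq, A = G * B ∧
        ∀ x : Fin s → Hq, qVecNorm (G.mulVec (B.mulVec x)) ≤ qVecNorm (B.mulVec x)) ∧
    (B.conjTranspose * B = A.conjTranspose * A ↔
      ∃ G : Matrix (Fin t) (Fin u) Hq, A = G * B ∧
        ∀ x : Fin s → Hq, qVecNorm (G.mulVec (B.mulVec x)) = qVecNorm (B.mulVec x)) := by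
  -- abbreviations
  have hGB : ∀ (G : Matrix (Fin t) (Fin u) Hq)
      (hfac : ∀ x : Fin s → Hq, G.mulVec (B.mulVec x) = A.mulVec x), A = G * B := by
    intro G hfac
    refine Matrix.ext fun i j => ?_
    have h2 : (G * B).mulVec (Pi.single j 1) = A.mulVec (Pi.single j 1) := by
      rw [← Matrix.mulVec_mulVec]; exact hfac _
    have h3 := congrFun h2 i
    simpa [Matrix.mulVec_single] using h3.symm
  have herm : (B.conjTranspose * B - A.conjTranspose * A).conjTranspose
      = B.conjTranspose * B - A.conjTranspose * A := by
    simp [Matrix.conjTranspose_sub, Matrix.conjTranspose_mul]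
  constructor
  · constructor
    · -- PSD → ∃ G
      intro hP
      have hle : ∀ x : Fin s → Hq,
          ∑ i, ‖A.mulVec x i‖ ^ 2 ≤ ∑ i, ‖B.mulVec x i‖ ^ 2 := by
        intro x
        obtain ⟨c, hc0, hc⟩ := hP.2 x
        rw [Matrix.sub_mulVec, dotProduct_sub, qd_quad_eq B x, qd_quad_eq A x,
          ← Quaternion.coe_sub] at hc
        have := Quaternion.coe_injective hc
        linarith
      have hker : ∀ x : Fin s → Hq, B.mulVec x = 0 → A.mulVec x = 0 := by
        intro x hx
        have h1 : ∑ i, ‖A.mulVec x i‖ ^ 2 ≤ 0 := by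
          have := hle x
          simpa [hx] using this
        have h2 : ∑ i, ‖A.mulVec x i‖ ^ 2 = 0 :=
          le_antisymm h1 (qd_sum_sq_nonneg _)
        have h3 := (Finset.sum_eq_zero_iff_of_nonneg
          (fun i _ => sq_nonneg ‖A.mulVec x i‖)).mp h2
        funext i
        have := h3 i (Finset.mem_univ i)
        have h4 : ‖A.mulVec x i‖ = 0 := by
          nlinarith [norm_nonneg (A.mulVec x i)]
        simpa using norm_eq_zero.mp h4
      obtain ⟨G, hfac⟩ := qd_exists_factor A B hker
      refine ⟨G, hGB G hfac, fun x => ?_⟩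
      rw [hfac x]
      exact Real.sqrt_le_sqrt (hle x)
    · -- ∃ G → PSD
      rintro ⟨G, hA, hle⟩
      have hAx : ∀ x : Fin s → Hq, A.mulVec x = G.mulVec (B.mulVec x) := by
        intro x; rw [hA, ← Matrix.mulVec_mulVec]
      refine ⟨herm, fun x => ?_⟩
      refine ⟨∑ i, ‖B.mulVec x i‖ ^ 2 - ∑ i, ‖A.mulVec x i‖ ^ 2, ?_, ?_⟩
      · have h1 : ∑ i, ‖G.mulVec (B.mulVec x) i‖ ^ 2 ≤ ∑ i, ‖B.mulVec x i‖ ^ 2 :=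
          qd_sq_of_qVecNorm_le (hle x)
        rw [← hAx x] at h1
        linarith
      · rw [Matrix.sub_mulVec, dotProduct_sub, qd_quad_eq B x, qd_quad_eq A x,
          ← Quaternion.coe_sub]
  · constructor
    · -- equality → ∃ G
      intro hEq
      have hS : ∀ x : Fin s → Hq,
          ∑ i, ‖A.mulVec x i‖ ^ 2 = ∑ i, ‖B.mulVec x i‖ ^ 2 := by
        intro x
        apply Quaternion.coe_injective
        rw [← qd_quad_eq A x, ← qd_quad_eq B x, hEq]
      have hker : ∀ x : Fin s → Hq, B.mulVec x = 0 → A.mulVec x = 0 := by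
        intro x hx
        have h2 : ∑ i, ‖A.mulVec x i‖ ^ 2 = 0 := by
          rw [hS x]; simp [hx]
        have h3 := (Finset.sum_eq_zero_iff_of_nonneg
          (fun i _ => sq_nonneg ‖A.mulVec x i‖)).mp h2
        funext i
        have := h3 i (Finset.mem_univ i)
        have h4 : ‖A.mulVec x i‖ = 0 := by
          nlinarith [norm_nonneg (A.mulVec x i)]
        simpa using norm_eq_zero.mp h4
      obtain ⟨G, hfac⟩ := qd_exists_factor A B hker
      refine ⟨G, hGB G hfac, fun x => ?_⟩
      rw [hfac x]
      show Real.sqrt _ = Real.sqrt _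
      rw [hS x]
    · -- ∃ G → equality
      rintro ⟨G, hA, heq⟩
      have hAx : ∀ x : Fin s → Hq, A.mulVec x = G.mulVec (B.mulVec x) := by
        intro x; rw [hA, ← Matrix.mulVec_mulVec]
      have hS : ∀ x : Fin s → Hq,
          ∑ i, ‖A.mulVec x i‖ ^ 2 = ∑ i, ‖B.mulVec x i‖ ^ 2 := by
        intro x
        have h1 : ∑ i, ‖G.mulVec (B.mulVec x) i‖ ^ 2 = ∑ i, ‖B.mulVec x i‖ ^ 2 :=
          qd_sq_of_qVecNorm_eq (heq x)
        rw [← hAx x] at h1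
        exact h1
      have hzero : B.conjTranspose * B - A.conjTranspose * A = 0 := by
        apply qd_herm_quad_zero _ herm
        intro x
        rw [Matrix.sub_mulVec, dotProduct_sub, qd_quad_eq B x, qd_quad_eq A x,
          ← Quaternion.coe_sub, hS x, sub_self]
        exact Quaternion.coe_zero
      have := sub_eq_zero.mp hzero
      exact this
end
end

section
/- (Block positivity criterion over the quaternions.) Let A ∈ ℍ^{t×t}, C ∈ ℍ^{u×u}, B ∈ ℍ^{t×u}, and let K = [[A, B],[B*, C]] ∈ ℍ^{(t+u)×(t+u)}. Then K is positive semidefinite if and only if the following hold: (i) A and C are positive semidefinite; (ii) there exist positive semidefinite matrices S_A ∈ ℍ^{t×t} and S_C ∈ ℍ^{u×u} with S_A·S_A = A and S_C·S_C = C, and a matrix G ∈ ℍ^{t×u} with ‖G *ᵥ y‖ ≤ ‖y‖ for all y ∈ ℍ^u, such that B = S_A·G·S_C. -/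
noncomputable section

open MeasureTheory Matrix
open scoped ComplexOrder

namespace QB
open Matrix Complex Polynomial
open scoped ComplexOrder
set_option linter.unusedSectionVars false

def c1 (x : Hq) : ℂ := ⟨x.re, x.imI⟩
def c2 (x : Hq) : ℂ := ⟨x.imJ, x.imK⟩

lemma c1_add (x y : Hq) : c1 (x + y) = c1 x + c1 y := by
  apply Complex.ext <;> simp [c1]

lemma c2_add (x y : Hq) : c2 (x + y) = c2 x + c2 y := by
  apply Complex.ext <;> simp [c2]

lemma c1_mul (x y : Hq) : c1 (x * y) = c1 x * c1 y - c2 x * (starRingEnd ℂ) (c2 y) := by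
  apply Complex.ext <;>
    simp [c1, c2, Quaternion.re_mul, Quaternion.imI_mul, Complex.mul_re, Complex.mul_im] <;> ring

lemma c2_mul (x y : Hq) : c2 (x * y) = c1 x * c2 y + c2 x * (starRingEnd ℂ) (c1 y) := by
  apply Complex.ext <;>
    simp [c1, c2, Quaternion.imJ_mul, Quaternion.imK_mul, Complex.mul_re, Complex.mul_im] <;> ring

lemma c1_star (x : Hq) : c1 (star x) = (starRingEnd ℂ) (c1 x) := by
  apply Complex.ext <;> simp [c1]

lemma c2_star (x : Hq) : c2 (star x) = - c2 x := by
  apply Complex.ext <;> simp [c2]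

lemma c_eq (x y : Hq) (h1 : c1 x = c1 y) (h2 : c2 x = c2 y) : x = y := by
  have e1 := congrArg Complex.re h1
  have e2 := congrArg Complex.im h1
  have e3 := congrArg Complex.re h2
  have e4 := congrArg Complex.im h2
  simp [c1, c2] at e1 e2 e3 e4
  exact Quaternion.ext _ _ e1 e2 e3 e4

lemma c1_real (c : ℝ) : c1 ((c : ℝ) : Hq) = (c : ℂ) := by
  apply Complex.ext <;> simp [c1]

lemma c1_sum {ι : Type*} (s : Finset ι) (f : ι → Hq) :
    c1 (∑ i ∈ s, f i) = ∑ i ∈ s, c1 (f i) :=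
  map_sum (AddMonoidHom.mk' c1 c1_add) f s

lemma c2_sum {ι : Type*} (s : Finset ι) (f : ι → Hq) :
    c2 (∑ i ∈ s, f i) = ∑ i ∈ s, c2 (f i) :=
  map_sum (AddMonoidHom.mk' c2 c2_add) f s

lemma norm_sq_c (x : Hq) : ‖x‖ ^ 2 = Complex.normSq (c1 x) + Complex.normSq (c2 x) := by
  have : ‖x‖ ^ 2 = Quaternion.normSq x := by
    rw [sq, ← Quaternion.normSq_eq_norm_mul_self]
  rw [this, Quaternion.normSq_def']
  simp [c1, c2, Complex.normSq_apply]
  ring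

variable {p q r : Type*}

def chi (M : Matrix p q Hq) : Matrix (p ⊕ p) (q ⊕ q) ℂ :=
  Matrix.fromBlocks (M.map c1) (M.map c2)
    (-(M.map (fun x => (starRingEnd ℂ) (c2 x)))) (M.map (fun x => (starRingEnd ℂ) (c1 x)))

lemma chi_mul [Fintype q] (M : Matrix p q Hq) (N : Matrix q r Hq) :
    chi (M * N) = chi M * chi N := by
  refine Matrix.ext fun i j => ?_
  rcases i with i | i <;> rcases j with j | j <;>
    simp only [chi, Matrix.mul_apply, fromBlocks_apply₁₁, fromBlocks_apply₁₂,
      fromBlocks_apply₂₁, fromBlocks_apply₂₂, Matrix.map_apply, Matrix.neg_apply,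
      Fintype.sum_sum_type, c1_sum, c2_sum, map_sum] <;>
    rw [← Finset.sum_add_distrib] <;>
    [skip; skip; rw [← Finset.sum_neg_distrib]; skip] <;>
    refine Finset.sum_congr rfl fun k _ => ?_ <;>
    simp only [c1_mul, c2_mul, map_sub, map_add, _root_.map_mul, map_neg,
      Complex.conj_conj] <;>
    ring

lemma chi_conjTranspose (M : Matrix p q Hq) : chi Mᴴ = (chi M)ᴴ := by
  ext i j
  rcases i with i | i <;> rcases j with j | j <;>
    simp [chi, Matrix.conjTranspose_apply, c1_star, c2_star]

lemma chi_inj (M N : Matrix p q Hq) (h : chi M = chi N) : M = N := by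
  refine Matrix.ext fun i j => ?_
  have h1 := congrFun (congrFun h (Sum.inl i)) (Sum.inl j)
  have h2 := congrFun (congrFun h (Sum.inl i)) (Sum.inr j)
  simp only [chi, fromBlocks_apply₁₁, fromBlocks_apply₁₂, Matrix.map_apply] at h1 h2
  exact c_eq _ _ h1 h2

def Jm (p : Type*) [DecidableEq p] : Matrix (p ⊕ p) (p ⊕ p) ℂ := Matrix.fromBlocks 0 1 (-1) 0

lemma Jm_mul_Jt [Fintype p] [DecidableEq p] : Jm p * (Jm p)ᵀ = 1 := by
  simp [Jm, fromBlocks_transpose, fromBlocks_multiply, ← fromBlocks_one]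

lemma Jt_mul_Jm [Fintype p] [DecidableEq p] : (Jm p)ᵀ * Jm p = 1 := by
  simp [Jm, fromBlocks_transpose, fromBlocks_multiply, ← fromBlocks_one]

def cconj (X : Matrix p q ℂ) : Matrix p q ℂ := X.map (starRingEnd ℂ)

def ChiRel [Fintype p] [Fintype q] [DecidableEq p] [DecidableEq q]
    (X : Matrix (p ⊕ p) (q ⊕ q) ℂ) : Prop :=
  Jm p * cconj X * (Jm q)ᵀ = X

lemma cconj_mul [Fintype q] (X : Matrix p q ℂ) (Y : Matrix q r ℂ) :
    cconj (X * Y) = cconj X * cconj Y := Matrix.map_mul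

lemma cconj_fromBlocks {n m n' m' : Type*} (a : Matrix n m ℂ) (b : Matrix n m' ℂ)
    (c : Matrix n' m ℂ) (d : Matrix n' m' ℂ) :
    cconj (fromBlocks a b c d) = fromBlocks (cconj a) (cconj b) (cconj c) (cconj d) := by
  refine Matrix.ext fun i j => ?_
  rcases i with i | i <;> rcases j with j | j <;> simp [cconj]

lemma cconj_chi [Fintype p] [Fintype q] (M : Matrix p q Hq) :
    cconj (chi M) = Matrix.fromBlocks (M.map fun x => (starRingEnd ℂ) (c1 x))
      (M.map fun x => (starRingEnd ℂ) (c2 x)) (-(M.map c2)) (M.map c1) := by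
  refine Matrix.ext fun i j => ?_
  rcases i with i | i <;> rcases j with j | j <;>
    simp [cconj, chi, Complex.conj_conj]

lemma chiRel_chi [Fintype p] [Fintype q] [DecidableEq p] [DecidableEq q]
    (M : Matrix p q Hq) : ChiRel (chi M) := by
  unfold ChiRel Jm
  rw [cconj_chi, fromBlocks_transpose, fromBlocks_multiply, fromBlocks_multiply]
  simp [chi, Matrix.mul_neg, Matrix.neg_mul]

variable [Fintype p] [Fintype q] [Fintype r] [DecidableEq p] [DecidableEq q] [DecidableEq r]

lemma chiRel_swap {X : Matrix (p ⊕ p) (q ⊕ q) ℂ} (hX : ChiRel X) :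
    Jm p * cconj X = X * Jm q := by
  have := congrArg (fun Y => Y * Jm q) hX
  simpa only [Matrix.mul_assoc, Jt_mul_Jm, Matrix.mul_one] using this

lemma chiRel_mul {X : Matrix (p ⊕ p) (q ⊕ q) ℂ} {Y : Matrix (q ⊕ q) (r ⊕ r) ℂ}
    (hX : ChiRel X) (hY : ChiRel Y) : ChiRel (X * Y) := by
  have hY' : Jm q * cconj Y * (Jm r)ᵀ = Y := hY
  unfold ChiRel
  rw [cconj_mul, ← Matrix.mul_assoc, chiRel_swap hX, Matrix.mul_assoc X,
    Matrix.mul_assoc X, hY']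

lemma cconj_algebraMap (a : ℝ) :
    cconj (algebraMap ℝ (Matrix (p ⊕ p) (p ⊕ p) ℂ) a) = algebraMap ℝ _ a := by
  refine Matrix.ext fun i j => ?_
  simp only [cconj, Matrix.map_apply, Matrix.algebraMap_matrix_apply]
  split <;> simp

lemma chiRel_algebraMap (a : ℝ) : ChiRel (algebraMap ℝ (Matrix (p ⊕ p) (p ⊕ p) ℂ) a) := by
  unfold ChiRel
  rw [cconj_algebraMap, Algebra.algebraMap_eq_smul_one, Matrix.mul_smul, Matrix.smul_mul,
    Matrix.mul_one, Jm_mul_Jt]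

lemma cconj_add (X Y : Matrix p q ℂ) : cconj (X + Y) = cconj X + cconj Y := by
  refine Matrix.ext fun i j => ?_; simp [cconj]

lemma chiRel_add {X Y : Matrix (p ⊕ p) (q ⊕ q) ℂ} (hX : ChiRel X) (hY : ChiRel Y) :
    ChiRel (X + Y) := by
  unfold ChiRel at *
  rw [cconj_add, Matrix.mul_add, Matrix.add_mul, hX, hY]

lemma chiRel_aeval {X : Matrix (p ⊕ p) (p ⊕ p) ℂ} (hX : ChiRel X) (f : Polynomial ℝ) :
    ChiRel (Polynomial.aeval X f) := by
  induction f using Polynomial.induction_on with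
  | C a => simpa using chiRel_algebraMap a
  | add f g hf hg => rw [map_add]; exact chiRel_add hf hg
  | monomial n a hn =>
      rw [pow_succ, ← mul_assoc, _root_.map_mul, Polynomial.aeval_X]
      exact chiRel_mul hn hX

lemma chiRel_blocks {X : Matrix (p ⊕ p) (q ⊕ q) ℂ} (hX : ChiRel X) :
    X.toBlocks₂₁ = -(cconj X.toBlocks₁₂) ∧ X.toBlocks₂₂ = cconj X.toBlocks₁₁ := by
  unfold ChiRel Jm at hX
  conv at hX => rw [← fromBlocks_toBlocks X]
  rw [cconj_fromBlocks, fromBlocks_transpose, fromBlocks_multiply, fromBlocks_multiply] at hX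
  simp only [Matrix.zero_mul, Matrix.one_mul, Matrix.neg_mul, Matrix.mul_zero, Matrix.mul_one,
    Matrix.mul_neg, Matrix.transpose_zero, Matrix.transpose_one,
    Matrix.transpose_neg, neg_neg] at hX
  simp only [zero_add, add_zero] at hX
  constructor
  · have := congrArg Matrix.toBlocks₂₁ hX
    simpa [toBlocks_fromBlocks₂₁] using this.symm
  · have := congrArg Matrix.toBlocks₂₂ hX
    simpa [toBlocks_fromBlocks₂₂] using this.symm

def unchi (X : Matrix (p ⊕ p) (q ⊕ q) ℂ) : Matrix p q Hq :=
  Matrix.of fun i j =>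
    ⟨(X (Sum.inl i) (Sum.inl j)).re, (X (Sum.inl i) (Sum.inl j)).im,
     (X (Sum.inl i) (Sum.inr j)).re, (X (Sum.inl i) (Sum.inr j)).im⟩

lemma c1_unchi (X : Matrix (p ⊕ p) (q ⊕ q) ℂ) (i : p) (j : q) :
    c1 (unchi X i j) = X (Sum.inl i) (Sum.inl j) := by
  apply Complex.ext <;> rfl

lemma c2_unchi (X : Matrix (p ⊕ p) (q ⊕ q) ℂ) (i : p) (j : q) :
    c2 (unchi X i j) = X (Sum.inl i) (Sum.inr j) := by
  apply Complex.ext <;> rfl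

lemma chi_unchi {X : Matrix (p ⊕ p) (q ⊕ q) ℂ} (hX : ChiRel X) : chi (unchi X) = X := by
  obtain ⟨h21, h22⟩ := chiRel_blocks hX
  refine Matrix.ext fun i j => ?_
  rcases i with i | i <;> rcases j with j | j
  · simp [chi, c1_unchi]
  · simp [chi, c2_unchi]
  · have : X (Sum.inr i) (Sum.inl j) = -((starRingEnd ℂ) (X (Sum.inl i) (Sum.inr j))) := by
      have := congrFun (congrFun h21 i) j
      simpa [toBlocks₂₁, toBlocks₁₂, cconj] using this
    rw [this]
    simp [chi, c2_unchi]
  · have : X (Sum.inr i) (Sum.inr j) = (starRingEnd ℂ) (X (Sum.inl i) (Sum.inl j)) := by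
      have := congrFun (congrFun h22 i) j
      simpa [toBlocks₂₂, toBlocks₁₁, cconj] using this
    rw [this]
    simp [chi, c1_unchi]


section Fap2
section Fap
variable {n : Type*} [Fintype n] [DecidableEq n] {A : Matrix n n ℂ}

/-- functional calculus via the eigendecomposition -/
def fap (hA : A.IsHermitian) (f : ℝ → ℝ) : Matrix n n ℂ :=
  (hA.eigenvectorUnitary : Matrix n n ℂ) * diagonal (Complex.ofReal ∘ f ∘ hA.eigenvalues) *
    (star (hA.eigenvectorUnitary : Matrix n n ℂ))

variable (hA : A.IsHermitian)

lemma fap_mul (f g : ℝ → ℝ) : fap hA f * fap hA g = fap hA (fun x => f x * g x) := by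
  unfold fap
  have h : ∀ {a b c d e f : Matrix n n ℂ}, (a * b * c) * (d * e * f) = a * (b * (c * d) * e) * f := by
    intros; simp only [mul_assoc]
  rw [h, (Matrix.mem_unitaryGroup_iff').mp hA.eigenvectorUnitary.2]
  rw [mul_one, diagonal_mul_diagonal]
  have : (diagonal fun i => (Complex.ofReal ∘ f ∘ hA.eigenvalues) i * (Complex.ofReal ∘ g ∘ hA.eigenvalues) i)
      = diagonal (Complex.ofReal ∘ (fun x => f x * g x) ∘ hA.eigenvalues) :=
    congrArg diagonal (funext fun i => by simp)
  rw [this]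

lemma fap_one : fap hA (fun _ => 1) = 1 := by
  unfold fap
  have : diagonal (Complex.ofReal ∘ (fun _ : ℝ => (1:ℝ)) ∘ hA.eigenvalues) = (1 : Matrix n n ℂ) := by
    rw [← diagonal_one]
    exact congrArg diagonal (funext fun i => by simp)
  rw [this, mul_one, (Matrix.mem_unitaryGroup_iff).mp hA.eigenvectorUnitary.2]

lemma fap_algebraMap (r : ℝ) : fap hA (fun _ => r) = algebraMap ℝ (Matrix n n ℂ) r := by
  unfold fap
  have : diagonal (Complex.ofReal ∘ (fun _ : ℝ => r) ∘ hA.eigenvalues) = (r : ℝ) • (1 : Matrix n n ℂ) := by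
    rw [← diagonal_one, ← diagonal_smul]
    exact congrArg diagonal (funext fun i => by simp [Complex.real_smul])
  rw [this, Matrix.mul_smul, Matrix.smul_mul, mul_one,
    (Matrix.mem_unitaryGroup_iff).mp hA.eigenvectorUnitary.2, Algebra.algebraMap_eq_smul_one]

lemma fap_add (f g : ℝ → ℝ) : fap hA f + fap hA g = fap hA (fun x => f x + g x) := by
  unfold fap
  rw [← Matrix.add_mul, ← Matrix.mul_add, diagonal_add]
  have : (diagonal fun i => (Complex.ofReal ∘ f ∘ hA.eigenvalues) i + (Complex.ofReal ∘ g ∘ hA.eigenvalues) i)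
      = diagonal (Complex.ofReal ∘ (fun x => f x + g x) ∘ hA.eigenvalues) :=
    congrArg diagonal (funext fun i => by simp)
  rw [this]

lemma fap_id : fap hA (fun x => x) = A := by
  unfold fap
  exact hA.spectral_theorem.symm

lemma fap_conjTranspose (f : ℝ → ℝ) : (fap hA f)ᴴ = fap hA f := by
  have hD : (diagonal (Complex.ofReal ∘ f ∘ hA.eigenvalues))ᴴ
      = diagonal (Complex.ofReal ∘ f ∘ hA.eigenvalues) := by
    rw [diagonal_conjTranspose]
    exact congrArg diagonal (funext fun i => by simp [Pi.star_def, Complex.conj_ofReal])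
  unfold fap
  rw [conjTranspose_mul, conjTranspose_mul, hD]
  rw [Matrix.star_eq_conjTranspose, conjTranspose_conjTranspose, ← Matrix.mul_assoc,
    ← Matrix.star_eq_conjTranspose]

lemma fap_posSemidef (f : ℝ → ℝ) (hf : ∀ x, 0 ≤ f x) : (fap hA f).PosSemidef := by
  unfold fap
  apply PosSemidef.mul_mul_conjTranspose_same
  refine posSemidef_diagonal_iff.mpr fun i => ?_
  rw [Function.comp_apply, Function.comp_apply]
  exact Complex.zero_le_real.mpr (hf _)

lemma fap_congr {f g : ℝ → ℝ} (h : ∀ i, f (hA.eigenvalues i) = g (hA.eigenvalues i)) :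
    fap hA f = fap hA g := by
  have : diagonal (Complex.ofReal ∘ f ∘ hA.eigenvalues)
      = diagonal (Complex.ofReal ∘ g ∘ hA.eigenvalues) :=
    congrArg diagonal (funext fun i => by simp [h i])
  unfold fap
  rw [this]

lemma fap_poly (f : Polynomial ℝ) : fap hA (fun x => f.eval x) = Polynomial.aeval A f := by
  induction f using Polynomial.induction_on with
  | C a => simp only [Polynomial.eval_C, Polynomial.aeval_C]; exact fap_algebraMap hA a
  | add f g hf hg =>
      rw [map_add, ← hf, ← hg, fap_add]
      exact fap_congr hA fun i => by simp
  | monomial k a hk =>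
      rw [pow_succ, ← mul_assoc, _root_.map_mul, Polynomial.aeval_X]
      calc fap hA (fun x => Polynomial.eval x (C a * X ^ k * X))
          = fap hA (fun x => (Polynomial.eval x (C a * X ^ k)) * x) :=
            fap_congr hA fun i => by simp
        _ = fap hA (fun x => Polynomial.eval x (C a * X ^ k)) * fap hA (fun x => x) :=
            (fap_mul hA _ _).symm
        _ = Polynomial.aeval A (C a * X ^ k) * A := by rw [hk, fap_id]

lemma fap_is_poly (f : ℝ → ℝ) : ∃ p : Polynomial ℝ, fap hA f = Polynomial.aeval A p := by
  classical
  refine ⟨Lagrange.interpolate (Finset.image hA.eigenvalues Finset.univ) id f, ?_⟩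
  rw [← fap_poly]
  exact fap_congr hA fun i =>
    (Lagrange.eval_interpolate_at_node f (Set.injOn_id _)
      (Finset.mem_image_of_mem _ (Finset.mem_univ i))).symm

end Fap

section Core

lemma dot_self_complex {n : Type*} [Fintype n] (w : n → ℂ) :
    dotProduct (star w) w = ((∑ i, Complex.normSq (w i) : ℝ) : ℂ) := by
  simp only [dotProduct, Pi.star_apply, RCLike.star_def]
  push_cast
  refine Finset.sum_congr rfl fun i _ => ?_
  rw [mul_comm, Complex.mul_conj]

lemma psd_one_sub_proj {n : Type*} [Fintype n] [DecidableEq n] {P : Matrix n n ℂ}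
    (hherm : Pᴴ = P) (hidem : P * P = P) : (1 - P).PosSemidef := by
  have h : (1 - P) = (1 - P)ᴴ * (1 - P) := by
    rw [conjTranspose_sub, conjTranspose_one, hherm, sub_mul, one_mul, mul_sub, mul_one, hidem]
    simp
  rw [h]
  exact posSemidef_conjTranspose_mul_self _

lemma contraction_of_proj {n m : Type*} [Fintype n] [Fintype m] [DecidableEq m]
    (N : Matrix n m ℂ) (hidem : (Nᴴ * N) * (Nᴴ * N) = Nᴴ * N)
    (z : m → ℂ) : ∑ i, Complex.normSq ((N *ᵥ z) i) ≤ ∑ i, Complex.normSq (z i) := by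
  have hherm : (Nᴴ * N)ᴴ = Nᴴ * N := by
    rw [conjTranspose_mul, conjTranspose_conjTranspose]
  have hp := (psd_one_sub_proj hherm hidem).dotProduct_mulVec_nonneg z
  have e0 : dotProduct (star z) ((Nᴴ * N) *ᵥ z) =
      ((∑ i, Complex.normSq ((N *ᵥ z) i) : ℝ) : ℂ) := by
    rw [← Matrix.mulVec_mulVec, Matrix.dotProduct_mulVec, ← star_mulVec]
    exact dot_self_complex _
  rw [sub_mulVec, dotProduct_sub, one_mulVec, e0, dot_self_complex] at hp
  rw [← Complex.ofReal_sub, Complex.zero_le_real] at hp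
  linarith

end Core

section MainCore
variable {n m : Type*} [Fintype n] [Fintype m] [DecidableEq n] [DecidableEq m]

private def sqf : ℝ → ℝ := Real.sqrt
private def gif : ℝ → ℝ := fun x => if x = 0 then 0 else (Real.sqrt x)⁻¹
private def indf : ℝ → ℝ := fun x => if x = 0 then 0 else 1

private lemma gif_sq {x : ℝ} (hx : 0 ≤ x) : gif x * gif x = x⁻¹ := by
  by_cases h : x = 0
  · simp [gif, h]
  · simp only [gif, if_neg h]
    rw [← mul_inv, Real.mul_self_sqrt hx]

private lemma l_gg {x : ℝ} (hx : 0 ≤ x) :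
    gif x * gif x * x * (gif x * gif x) = gif x * gif x := by
  rw [gif_sq hx]
  by_cases h : x = 0
  · simp [h]
  · field_simp

private lemma l_gxg {x : ℝ} (hx : 0 ≤ x) : gif x * x * gif x = indf x := by
  by_cases h : x = 0
  · simp [gif, indf, h]
  · simp only [gif, indf, if_neg h]
    have hs : Real.sqrt x ≠ 0 :=
      Real.sqrt_ne_zero'.mpr (lt_of_le_of_ne hx (Ne.symm h))
    field_simp
    exact (Real.sq_sqrt hx).symm

private lemma l_sgx {x : ℝ} (hx : 0 ≤ x) : sqf x * gif x * x = x := by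
  by_cases h : x = 0
  · simp [h]
  · simp only [sqf, gif, if_neg h]
    have hs : Real.sqrt x ≠ 0 :=
      Real.sqrt_ne_zero'.mpr (lt_of_le_of_ne hx (Ne.symm h))
    field_simp

private lemma l_ind_idem (x : ℝ) : indf x * indf x = indf x := by
  by_cases h : x = 0 <;> simp [indf, h]

theorem complex_core (A' : Matrix n n ℂ) (C' : Matrix m m ℂ) (B' : Matrix n m ℂ)
    (hK : (fromBlocks A' B' B'ᴴ C').PosSemidef) :
    ∃ (SA : Matrix n n ℂ) (SC : Matrix m m ℂ) (G : Matrix n m ℂ),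
      SA.PosSemidef ∧ SC.PosSemidef ∧ SA * SA = A' ∧ SC * SC = C' ∧
      (∀ y : m → ℂ, ∑ i, Complex.normSq ((G *ᵥ y) i) ≤ ∑ i, Complex.normSq (y i)) ∧
      B' = SA * G * SC ∧
      (∃ p : Polynomial ℝ, SA = Polynomial.aeval A' p) ∧
      (∃ p : Polynomial ℝ, SC = Polynomial.aeval C' p) ∧
      (∃ p q : Polynomial ℝ, G = Polynomial.aeval A' p * B' * Polynomial.aeval C' q) := by
  obtain ⟨L, hL⟩ : ∃ L : Matrix (n ⊕ m) (n ⊕ m) ℂ, fromBlocks A' B' B'ᴴ C' = Lᴴ * L := by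
    open MatrixOrder in
    obtain ⟨L, hLsa, -, hLL⟩ := CFC.exists_sqrt_of_isSelfAdjoint_of_quasispectrumRestricts
      hK.isHermitian (QuasispectrumRestricts.nnreal_of_nonneg hK.nonneg)
    exact ⟨L, by rw [← hLL]; congr 1; exact hLsa.star_eq.symm⟩
  set X : Matrix (n ⊕ m) n ℂ := L.submatrix id Sum.inl with hXdef
  set Y : Matrix (n ⊕ m) m ℂ := L.submatrix id Sum.inr with hYdef
  have hXX : Xᴴ * X = A' := by
    refine Matrix.ext fun i j => ?_
    have h := congrFun (congrFun hL (Sum.inl i)) (Sum.inl j)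
    rw [fromBlocks_apply₁₁] at h
    rw [h]
    simp [Matrix.mul_apply, hXdef, Matrix.conjTranspose_apply, Matrix.submatrix_apply]
  have hXY : Xᴴ * Y = B' := by
    refine Matrix.ext fun i j => ?_
    have h := congrFun (congrFun hL (Sum.inl i)) (Sum.inr j)
    rw [fromBlocks_apply₁₂] at h
    rw [h]
    simp [Matrix.mul_apply, hXdef, hYdef, Matrix.conjTranspose_apply, Matrix.submatrix_apply]
  have hYY : Yᴴ * Y = C' := by
    refine Matrix.ext fun i j => ?_
    have h := congrFun (congrFun hL (Sum.inr i)) (Sum.inr j)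
    rw [fromBlocks_apply₂₂] at h
    rw [h]
    simp [Matrix.mul_apply, hYdef, Matrix.conjTranspose_apply, Matrix.submatrix_apply]
  have hA' : A'.PosSemidef := hXX ▸ posSemidef_conjTranspose_mul_self X
  have hC' : C'.PosSemidef := hYY ▸ posSemidef_conjTranspose_mul_self Y
  set HA := hA'.1 with hHA
  set HC := hC'.1 with hHC
  set SA := fap HA sqf with hSA
  set TA := fap HA gif with hTA
  set SC := fap HC sqf with hSC
  set TC := fap HC gif with hTC
  set PA := fap HA (fun x => sqf x * gif x) with hPA
  set PC := fap HC (fun x => sqf x * gif x) with hPC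
  set TT := fap HA (fun x => gif x * gif x) with hTT
  set IC := fap HC indf with hIC
  have evA := hA'.eigenvalues_nonneg
  have evC := hC'.eigenvalues_nonneg
  -- SA * SA = A'
  have hSAsq : SA * SA = A' := by
    rw [hSA, fap_mul]
    calc fap HA (fun x => sqf x * sqf x) = fap HA (fun x => x) :=
          fap_congr HA fun i => Real.mul_self_sqrt (evA i)
      _ = A' := fap_id HA
  have hSCsq : SC * SC = C' := by
    rw [hSC, fap_mul]
    calc fap HC (fun x => sqf x * sqf x) = fap HC (fun x => x) :=
          fap_congr HC fun i => Real.mul_self_sqrt (evC i)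
      _ = C' := fap_id HC
  -- TT * A' * TT = TT
  have hTTATT : TT * A' * TT = TT := by
    have h1 := fap_mul HA (fun x => gif x * gif x) (fun x => x)
    have h2 := fap_mul HA (fun x => (gif x * gif x) * x) (fun x => gif x * gif x)
    rw [← h1, fap_id] at h2
    rw [hTT, h2]
    exact fap_congr HA fun i => l_gg (evA i)
  -- TC * C' * TC = IC
  have hTCCT : TC * C' * TC = IC := by
    have h1 := fap_mul HC gif (fun x => x)
    have h2 := fap_mul HC (fun x => gif x * x) gif
    rw [← h1, fap_id] at h2
    rw [hTC, hIC, h2]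
    exact fap_congr HC fun i => l_gxg (evC i)
  have hTAmul : TA * TA = TT := by rw [hTA, hTT, fap_mul]
  -- projection Q1
  have hNN1 : (TA * Xᴴ)ᴴ * (TA * Xᴴ) = X * TT * Xᴴ := by
    rw [conjTranspose_mul, conjTranspose_conjTranspose, hTA, fap_conjTranspose, ← hTA,
      Matrix.mul_assoc, ← Matrix.mul_assoc TA TA, hTAmul, ← Matrix.mul_assoc]
  have hQ1idem : (X * TT * Xᴴ) * (X * TT * Xᴴ) = X * TT * Xᴴ := by
    calc (X * TT * Xᴴ) * (X * TT * Xᴴ) = X * (TT * (Xᴴ * X) * TT) * Xᴴ := by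
          simp only [Matrix.mul_assoc]
      _ = X * (TT * A' * TT) * Xᴴ := by rw [hXX]
      _ = X * TT * Xᴴ := by rw [hTTATT, Matrix.mul_assoc]
  have hbound1 : ∀ z : (n ⊕ m) → ℂ,
      ∑ i, Complex.normSq (((TA * Xᴴ) *ᵥ z) i) ≤ ∑ i, Complex.normSq (z i) := by
    intro z
    refine contraction_of_proj (TA * Xᴴ) ?_ z
    rw [hNN1]; exact hQ1idem
  -- projection Q2
  have hNN2 : (Y * TC)ᴴ * (Y * TC) = IC := by
    calc (Y * TC)ᴴ * (Y * TC) = TC * (Yᴴ * Y) * TC := by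
          rw [conjTranspose_mul, hTC, fap_conjTranspose, ← hTC]
          simp only [Matrix.mul_assoc]
      _ = TC * C' * TC := by rw [hYY]
      _ = IC := hTCCT
  have hICidem : IC * IC = IC := by
    rw [hIC, fap_mul]
    exact fap_congr HC fun i => l_ind_idem _
  have hbound2 : ∀ y : m → ℂ,
      ∑ i, Complex.normSq (((Y * TC) *ᵥ y) i) ≤ ∑ i, Complex.normSq (y i) := by
    intro y
    refine contraction_of_proj (Y * TC) ?_ y
    rw [hNN2]; exact hICidem
  set G := TA * B' * TC with hG
  have hGdecomp : G = (TA * Xᴴ) * (Y * TC) := by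
    rw [hG, ← hXY]; simp only [Matrix.mul_assoc]
  have hcontr : ∀ y : m → ℂ, ∑ i, Complex.normSq ((G *ᵥ y) i) ≤ ∑ i, Complex.normSq (y i) := by
    intro y
    rw [hGdecomp, ← Matrix.mulVec_mulVec]
    exact le_trans (hbound1 _) (hbound2 y)
  -- factorization
  have hPAherm : PAᴴ = PA := by rw [hPA]; exact fap_conjTranspose HA _
  have hPCherm : PCᴴ = PC := by rw [hPC]; exact fap_conjTranspose HC _
  have hPAA : PA * A' = A' := by
    have h2 := fap_mul HA (fun x => sqf x * gif x) (fun x => x)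
    rw [fap_id] at h2
    rw [hPA, h2]
    calc fap HA (fun x => sqf x * gif x * x) = fap HA (fun x => x) :=
          fap_congr HA fun i => l_sgx (evA i)
      _ = A' := fap_id HA
  have hAPA : A' * PA = A' := by
    have h2 := fap_mul HA (fun x => x) (fun x => sqf x * gif x)
    rw [fap_id] at h2
    rw [hPA, h2]
    calc fap HA (fun x => x * (sqf x * gif x)) = fap HA (fun x => x) :=
          fap_congr HA fun i => by rw [← mul_comm (sqf _ * gif _)]; exact l_sgx (evA i)
      _ = A' := fap_id HA
  have hCPC : C' * PC = C' := by
    have h2 := fap_mul HC (fun x => x) (fun x => sqf x * gif x)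
    rw [fap_id] at h2
    rw [hPC, h2]
    calc fap HC (fun x => x * (sqf x * gif x)) = fap HC (fun x => x) :=
          fap_congr HC fun i => by rw [← mul_comm (sqf _ * gif _)]; exact l_sgx (evC i)
      _ = C' := fap_id HC
  have hPCC : PC * C' = C' := by
    have h2 := fap_mul HC (fun x => sqf x * gif x) (fun x => x)
    rw [fap_id] at h2
    rw [hPC, h2]
    calc fap HC (fun x => sqf x * gif x * x) = fap HC (fun x => x) :=
          fap_congr HC fun i => l_sgx (evC i)
      _ = C' := fap_id HC
  -- X * PA = X
  have hXPA : X * PA = X := by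
    have hV : (X - X * PA)ᴴ * (X - X * PA) = 0 := by
      rw [conjTranspose_sub, conjTranspose_mul, hPAherm, Matrix.sub_mul, Matrix.mul_sub,
        Matrix.mul_sub, hXX, ← Matrix.mul_assoc Xᴴ X PA, hXX,
        Matrix.mul_assoc PA Xᴴ (X * PA), ← Matrix.mul_assoc Xᴴ X PA, hXX,
        Matrix.mul_assoc PA Xᴴ X, hXX, hAPA, hPAA]
      simp
    have := conjTranspose_mul_self_eq_zero.mp hV
    rw [sub_eq_zero] at this
    exact this.symm
  have hPAX : PA * Xᴴ = Xᴴ := by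
    have := congrArg Matrix.conjTranspose hXPA
    rwa [conjTranspose_mul, hPAherm] at this
  have hYPC : Y * PC = Y := by
    have hV : (Y - Y * PC)ᴴ * (Y - Y * PC) = 0 := by
      rw [conjTranspose_sub, conjTranspose_mul, hPCherm, Matrix.sub_mul, Matrix.mul_sub,
        Matrix.mul_sub, hYY, ← Matrix.mul_assoc Yᴴ Y PC, hYY,
        Matrix.mul_assoc PC Yᴴ (Y * PC), ← Matrix.mul_assoc Yᴴ Y PC, hYY,
        Matrix.mul_assoc PC Yᴴ Y, hYY, hCPC, hPCC]
      simp
    have := conjTranspose_mul_self_eq_zero.mp hV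
    rw [sub_eq_zero] at this
    exact this.symm
  have hSATA : SA * TA = PA := by rw [hSA, hTA, hPA, fap_mul]
  have hTCSC : TC * SC = PC := by
    rw [hTC, hSC, hPC, fap_mul]
    exact fap_congr HC fun i => mul_comm _ _
  have hfact : B' = SA * G * SC := by
    have h1 : SA * G * SC = PA * B' * PC := by
      rw [← hSATA, ← hTCSC, hG]
      simp only [Matrix.mul_assoc]
    have h2 : PA * B' * PC = B' := by
      calc PA * B' * PC = (PA * Xᴴ) * (Y * PC) := by rw [← hXY]; simp only [Matrix.mul_assoc]
        _ = Xᴴ * Y := by rw [hPAX, hYPC]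
        _ = B' := hXY
    rw [h1, h2]
  obtain ⟨pA, hpA⟩ := fap_is_poly HA sqf
  obtain ⟨pC, hpC⟩ := fap_is_poly HC sqf
  obtain ⟨qA, hqA⟩ := fap_is_poly HA gif
  obtain ⟨qC, hqC⟩ := fap_is_poly HC gif
  exact ⟨SA, SC, G, hSA ▸ fap_posSemidef HA sqf (fun x => Real.sqrt_nonneg x),
    hSC ▸ fap_posSemidef HC sqf (fun x => Real.sqrt_nonneg x),
    hSAsq, hSCsq, hcontr, hfact,
    ⟨pA, by rw [hSA, hpA]⟩, ⟨pC, by rw [hSC, hpC]⟩,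
    ⟨qA, qC, by rw [hG, hTA, hTC, hqA, hqC]⟩⟩

end MainCore

end Fap2

section Rev
variable {n m : Type*} [Fintype n] [Fintype m] [DecidableEq n] [DecidableEq m]
private def eu (v : n → ℂ) : EuclideanSpace ℂ n := (WithLp.equiv 2 (n → ℂ)).symm v

lemma norm_euclid (v : n → ℂ) : ‖eu v‖ ^ 2 = ∑ i, Complex.normSq (v i) := by
  rw [EuclideanSpace.norm_eq, Real.sq_sqrt (by positivity)]
  refine Finset.sum_congr rfl fun i _ => ?_
  rw [← Complex.sq_norm]; rfl

lemma re_dot_ge (x : n → ℂ) (w : n → ℂ) :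
    -(Real.sqrt (∑ i, Complex.normSq (x i)) * Real.sqrt (∑ i, Complex.normSq (w i)))
      ≤ (dotProduct (star x) w).re := by
  have h1 : dotProduct (star x) w = (inner ℂ (eu x) (eu w) : ℂ) := by
    rw [dotProduct, PiLp.inner_apply]
    refine Finset.sum_congr rfl fun i _ => ?_
    simp [RCLike.inner_apply, eu, mul_comm]
  have h2 : ‖(inner ℂ (eu x) (eu w) : ℂ)‖ ≤ ‖eu x‖ * ‖eu w‖ := norm_inner_le_norm _ _
  have h3 : ‖eu x‖ = Real.sqrt (∑ i, Complex.normSq (x i)) := by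
    rw [← Real.sqrt_sq (norm_nonneg _), norm_euclid]
  have h4 : ‖eu w‖ = Real.sqrt (∑ i, Complex.normSq (w i)) := by
    rw [← Real.sqrt_sq (norm_nonneg _), norm_euclid]
  rw [h1]
  have h5 := (abs_le.mp (Complex.abs_re_le_norm (inner ℂ (eu x) (eu w) : ℂ))).1
  calc -(Real.sqrt (∑ i, Complex.normSq (x i)) * Real.sqrt (∑ i, Complex.normSq (w i)))
      = -(‖eu x‖ * ‖eu w‖) := by rw [h3, h4]
    _ ≤ -‖(inner ℂ (eu x) (eu w) : ℂ)‖ := neg_le_neg h2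
    _ ≤ (inner ℂ (eu x) (eu w) : ℂ).re := by simpa using h5

lemma dot_self_complex' {n : Type*} [Fintype n] (w : n → ℂ) :
    dotProduct (star w) w = ((∑ i, Complex.normSq (w i) : ℝ) : ℂ) := by
  simp only [dotProduct, Pi.star_apply, RCLike.star_def]
  push_cast
  refine Finset.sum_congr rfl fun i _ => ?_
  rw [mul_comm, Complex.mul_conj]

lemma dot_conj_swap (G : Matrix n m ℂ) (x : n → ℂ) (y : m → ℂ) :
    dotProduct (star y) (Gᴴ *ᵥ x) = (starRingEnd ℂ) (dotProduct (star x) (G *ᵥ y)) := by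
  simp only [dotProduct, Matrix.mulVec, dotProduct, map_sum, _root_.map_mul, Pi.star_apply,
    Matrix.conjTranspose_apply, RCLike.star_def, Complex.conj_conj, Finset.mul_sum]
  rw [Finset.sum_comm]
  refine Finset.sum_congr rfl fun i _ => Finset.sum_congr rfl fun j _ => ?_
  ring

lemma dot_elim (z : (n ⊕ m) → ℂ) (a : n → ℂ) (b : m → ℂ) :
    dotProduct z (Sum.elim a b) = dotProduct (z ∘ Sum.inl) a + dotProduct (z ∘ Sum.inr) b := by
  simp only [dotProduct, Fintype.sum_sum_type]
  rfl

lemma middle_psd (G : Matrix n m ℂ)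
    (hG : ∀ y : m → ℂ, ∑ i, Complex.normSq ((G *ᵥ y) i) ≤ ∑ i, Complex.normSq (y i)) :
    (fromBlocks (1 : Matrix n n ℂ) G Gᴴ (1 : Matrix m m ℂ)).PosSemidef := by
  refine posSemidef_iff_dotProduct_mulVec.mpr ⟨?_, ?_⟩
  · show (fromBlocks (1 : Matrix n n ℂ) G Gᴴ (1 : Matrix m m ℂ))ᴴ = _
    simp [fromBlocks_conjTranspose]
  · intro z
    rw [fromBlocks_mulVec, dot_elim, one_mulVec, one_mulVec, dotProduct_add, dotProduct_add]
    set x : n → ℂ := z ∘ Sum.inl with hxdef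
    set y : m → ℂ := z ∘ Sum.inr with hydef
    have hsx : star z ∘ Sum.inl = star x := rfl
    have hsy : star z ∘ Sum.inr = star y := rfl
    rw [hsx, hsy, dot_conj_swap, dot_self_complex' x, dot_self_complex' y]
    set d := dotProduct (star x) (G *ᵥ y) with hd
    set Sx := ∑ i, Complex.normSq (x i) with hSx
    set Sy := ∑ i, Complex.normSq (y i) with hSy
    set Sw := ∑ i, Complex.normSq ((G *ᵥ y) i) with hSw
    have hdre : -(Real.sqrt Sx * Real.sqrt Sw) ≤ d.re := re_dot_ge x (G *ᵥ y)
    have hSx0 : 0 ≤ Sx := Finset.sum_nonneg fun i _ => Complex.normSq_nonneg _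
    have hSy0 : 0 ≤ Sy := Finset.sum_nonneg fun i _ => Complex.normSq_nonneg _
    have hSw0 : 0 ≤ Sw := Finset.sum_nonneg fun i _ => Complex.normSq_nonneg _
    have h6 : Real.sqrt Sw ≤ Real.sqrt Sy := Real.sqrt_le_sqrt (hG y)
    have key : 0 ≤ Sx + 2 * d.re + Sy := by
      nlinarith [Real.sq_sqrt hSx0, Real.sq_sqrt hSy0, Real.sqrt_nonneg Sx,
        Real.sqrt_nonneg Sy, Real.sqrt_nonneg Sw, hdre, h6,
        mul_self_nonneg (Real.sqrt Sx - Real.sqrt Sy),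
        mul_nonneg (Real.sqrt_nonneg Sx) (sub_nonneg.mpr h6)]
    have harr : ((Sx : ℂ) + d) + ((starRingEnd ℂ) d + (Sy : ℂ))
        = ((Sx + 2 * d.re + Sy : ℝ) : ℂ) := by
      apply Complex.ext <;> simp <;> ring
    rw [harr]
    exact Complex.zero_le_real.mpr key

lemma complex_reverse {S₁ : Matrix n n ℂ} {S₂ : Matrix m m ℂ} (G : Matrix n m ℂ)
    (h1 : S₁.PosSemidef) (h2 : S₂.PosSemidef)
    (hG : ∀ y : m → ℂ, ∑ i, Complex.normSq ((G *ᵥ y) i) ≤ ∑ i, Complex.normSq (y i)) :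
    (fromBlocks (S₁ * S₁) (S₁ * G * S₂) (S₁ * G * S₂)ᴴ (S₂ * S₂)).PosSemidef := by
  have hM := (middle_psd G hG).mul_mul_conjTranspose_same (fromBlocks S₁ 0 0 S₂)
  have he : fromBlocks S₁ (0 : Matrix n m ℂ) (0 : Matrix m n ℂ) S₂ *
        fromBlocks 1 G Gᴴ 1 * (fromBlocks S₁ (0 : Matrix n m ℂ) (0 : Matrix m n ℂ) S₂)ᴴ
      = fromBlocks (S₁ * S₁) (S₁ * G * S₂) (S₁ * G * S₂)ᴴ (S₂ * S₂) := by
    rw [fromBlocks_conjTranspose, conjTranspose_zero, conjTranspose_zero, h1.1, h2.1,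
      fromBlocks_multiply, fromBlocks_multiply]
    simp only [conjTranspose_mul, h1.1.eq, h2.1.eq, Matrix.mul_assoc, Matrix.mul_one,
      Matrix.one_mul, Matrix.mul_zero, Matrix.zero_mul, add_zero, zero_add]
  rw [← he]
  exact hM

end Rev

section Shuffle
variable {p r : Type*}

def shuf (p r : Type*) : ((p ⊕ r) ⊕ (p ⊕ r)) ≃ ((p ⊕ p) ⊕ (r ⊕ r)) where
  toFun := Sum.elim (Sum.elim (Sum.inl ∘ Sum.inl) (Sum.inr ∘ Sum.inl))
    (Sum.elim (Sum.inl ∘ Sum.inr) (Sum.inr ∘ Sum.inr))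
  invFun := Sum.elim (Sum.elim (Sum.inl ∘ Sum.inl) (Sum.inr ∘ Sum.inl))
    (Sum.elim (Sum.inl ∘ Sum.inr) (Sum.inr ∘ Sum.inr))
  left_inv := by rintro ((i|i)|(i|i)) <;> rfl
  right_inv := by rintro ((i|i)|(i|i)) <;> rfl

lemma chi_fromBlocks (A : Matrix p p Hq) (B : Matrix p r Hq) (C : Matrix r p Hq)
    (D : Matrix r r Hq) :
    chi (Matrix.fromBlocks A B C D) =
      (Matrix.fromBlocks (chi A) (chi B) (chi C) (chi D)).submatrix (shuf p r) (shuf p r) := by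
  refine Matrix.ext fun i j => ?_
  rcases i with (i|i)|(i|i) <;> rcases j with (j|j)|(j|j) <;> rfl

end Shuffle

section Transfer
variable {p q : Type*}
lemma chi_apply_ll (M : Matrix p q Hq) (i : p) (j : q) :
    chi M (Sum.inl i) (Sum.inl j) = c1 (M i j) := rfl
lemma chi_apply_lr (M : Matrix p q Hq) (i : p) (j : q) :
    chi M (Sum.inl i) (Sum.inr j) = c2 (M i j) := rfl
lemma chi_apply_rl (M : Matrix p q Hq) (i : p) (j : q) :
    chi M (Sum.inr i) (Sum.inl j) = -((starRingEnd ℂ) (c2 (M i j))) := rfl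
lemma chi_apply_rr (M : Matrix p q Hq) (i : p) (j : q) :
    chi M (Sum.inr i) (Sum.inr j) = (starRingEnd ℂ) (c1 (M i j)) := rfl

/-- vector companion of `chi` -/
def phi (v : q → Hq) : (q ⊕ q) → ℂ :=
  Sum.elim (fun i => c1 (v i)) (fun i => -((starRingEnd ℂ) (c2 (v i))))

lemma phi_surjective (z : (q ⊕ q) → ℂ) : ∃ v : q → Hq, phi v = z := by
  refine ⟨fun i => ⟨(z (Sum.inl i)).re, (z (Sum.inl i)).im,
    -((z (Sum.inr i)).re), (z (Sum.inr i)).im⟩, ?_⟩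
  funext k
  rcases k with i | i
  · exact Complex.ext (by simp [phi, c1]) (by simp [phi, c1])
  · exact Complex.ext (by simp [phi, c2]) (by simp [phi, c2])

variable [Fintype p] [Fintype q]

lemma mulVec_phi (M : Matrix p q Hq) (v : q → Hq) :
    chi M *ᵥ phi v = phi (M *ᵥ v) := by
  funext k
  rcases k with i | i <;>
    simp only [Matrix.mulVec, dotProduct, Fintype.sum_sum_type, phi, Sum.elim_inl, Sum.elim_inr,
      chi_apply_ll, chi_apply_lr, chi_apply_rl, chi_apply_rr, c1_sum, c2_sum, map_sum,
      Finset.sum_neg_distrib] <;>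
    rw [← Finset.sum_add_distrib] <;>
    [skip; rw [← Finset.sum_neg_distrib]] <;>
    refine Finset.sum_congr rfl fun j _ => ?_ <;>
    simp only [c1_mul, c2_mul, map_sub, map_add, _root_.map_mul, map_neg, Complex.conj_conj] <;>
    ring

lemma dot_phi (v w : q → Hq) :
    dotProduct (star (phi v)) (phi w) = c1 (dotProduct (star v) w) := by
  simp only [dotProduct, Pi.star_apply, Fintype.sum_sum_type, phi, Sum.elim_inl, Sum.elim_inr,
    c1_sum]
  rw [← Finset.sum_add_distrib]
  refine Finset.sum_congr rfl fun j _ => ?_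
  simp only [c1_mul, c1_star, c2_star, RCLike.star_def, map_neg, _root_.map_mul,
    Complex.conj_conj, neg_neg, map_sub]
  ring

lemma sum_normSq_phi (v : q → Hq) :
    ∑ k, Complex.normSq (phi v k) = ∑ i, ‖v i‖ ^ 2 := by
  simp only [Fintype.sum_sum_type, phi, Sum.elim_inl, Sum.elim_inr, norm_sq_c, map_neg,
    Complex.normSq_neg, Complex.normSq_conj]
  rw [← Finset.sum_add_distrib]

lemma quat_real_of_star_eq {a : Hq} (h : star a = a) : a = ((a.re : ℝ) : Hq) := by
  have h1 : -a.imI = a.imI := congrArg QuaternionAlgebra.imI h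
  have h2 : -a.imJ = a.imJ := congrArg QuaternionAlgebra.imJ h
  have h3 : -a.imK = a.imK := congrArg QuaternionAlgebra.imK h
  refine Quaternion.ext _ _ (by simp) ?_ ?_ ?_
  · simp only [Quaternion.imI_coe]; linarith
  · simp only [Quaternion.imJ_coe]; linarith
  · simp only [Quaternion.imK_coe]; linarith

lemma qps_iff_chi_psd {M : Matrix p p Hq} :
    QPosSemidef M ↔ (chi M).PosSemidef := by
  constructor
  · rintro ⟨hH, hpos⟩
    refine posSemidef_iff_dotProduct_mulVec.mpr ⟨?_, ?_⟩
    · show (chi M)ᴴ = chi M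
      rw [← chi_conjTranspose, hH]
    · intro z
      obtain ⟨v, rfl⟩ := phi_surjective z
      rw [mulVec_phi, dot_phi]
      obtain ⟨c, hc, hceq⟩ := hpos v
      rw [hceq, c1_real]
      exact_mod_cast hc
  · intro hchi
    obtain ⟨hH, hpos⟩ := posSemidef_iff_dotProduct_mulVec.mp hchi
    constructor
    · apply chi_inj
      rw [chi_conjTranspose]
      exact hH
    · intro x
      set a := dotProduct (star x) (M.mulVec x) with ha
      have hMH : Mᴴ = M := chi_inj _ _ (by rw [chi_conjTranspose]; exact hH)
      have hstar : star a = a := by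
        rw [ha]
        calc star (dotProduct (star x) (M *ᵥ x))
            = dotProduct (star (M *ᵥ x)) x := by
              simp only [dotProduct, star_sum, StarMul.star_mul, star_star, Pi.star_apply]
          _ = dotProduct (star x) (Mᴴ *ᵥ x) := by
              rw [star_mulVec, ← dotProduct_mulVec]
          _ = a := by rw [hMH, ha]
      have hre : a = ((a.re : ℝ) : Hq) := quat_real_of_star_eq hstar
      refine ⟨a.re, ?_, hre.symm ▸ rfl⟩
      have hz := hpos (phi x)
      rw [mulVec_phi, dot_phi, ← ha] at hz
      rw [hre, c1_real] at hz
      exact_mod_cast hz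


end Transfer

end QB

set_option maxHeartbeats 2000000 in
/-- block positivity criterion over the quaternions. -/
theorem quaternionic_block_posSemidef {t u : ℕ}
    (A : Matrix (Fin t) (Fin t) Hq) (C : Matrix (Fin u) (Fin u) Hq)
    (B : Matrix (Fin t) (Fin u) Hq) :
    QPosSemidef (Matrix.fromBlocks A B B.conjTranspose C) ↔
      (QPosSemidef A ∧ QPosSemidef C) ∧
      ∃ (SA : Matrix (Fin t) (Fin t) Hq) (SC : Matrix (Fin u) (Fin u) Hq)
        (G : Matrix (Fin t) (Fin u) Hq),
          QPosSemidef SA ∧ QPosSemidef SC ∧ SA * SA = A ∧ SC * SC = C ∧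
          (∀ y : Fin u → Hq, qVecNorm (G.mulVec y) ≤ qVecNorm y) ∧
          B = SA * G * SC := by
  classical
  constructor
  · intro hK
    have hchiK : (QB.chi (Matrix.fromBlocks A B B.conjTranspose C)).PosSemidef :=
      QB.qps_iff_chi_psd.mp hK
    rw [QB.chi_fromBlocks] at hchiK
    have hblocks : (Matrix.fromBlocks (QB.chi A) (QB.chi B) (QB.chi B)ᴴ (QB.chi C)).PosSemidef := by
      have h := (Matrix.posSemidef_submatrix_equiv (QB.shuf (Fin t) (Fin u))).mp hchiK
      rwa [QB.chi_conjTranspose] at h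
    obtain ⟨SA', SC', G', hSA'p, hSC'p, hSA'sq, hSC'sq, hcontr', hfact',
      ⟨pa, hpa⟩, ⟨pc, hpc⟩, ⟨qa, qc, hq⟩⟩ :=
      QB.complex_core (QB.chi A) (QB.chi C) (QB.chi B) hblocks
    have hrelA : QB.ChiRel SA' := hpa ▸ QB.chiRel_aeval (QB.chiRel_chi A) pa
    have hrelC : QB.ChiRel SC' := hpc ▸ QB.chiRel_aeval (QB.chiRel_chi C) pc
    have hrelG : QB.ChiRel G' := by
      rw [hq]
      exact QB.chiRel_mul (QB.chiRel_mul (QB.chiRel_aeval (QB.chiRel_chi A) qa)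
        (QB.chiRel_chi B)) (QB.chiRel_aeval (QB.chiRel_chi C) qc)
    set SA := QB.unchi SA' with hSAdef
    set SC := QB.unchi SC' with hSCdef
    set G := QB.unchi G' with hGdef
    have hSAc : QB.chi SA = SA' := QB.chi_unchi hrelA
    have hSCc : QB.chi SC = SC' := QB.chi_unchi hrelC
    have hGc : QB.chi G = G' := QB.chi_unchi hrelG
    refine ⟨⟨?_, ?_⟩, SA, SC, G, ?_, ?_, ?_, ?_, ?_, ?_⟩
    · apply QB.qps_iff_chi_psd.mpr
      have h := Matrix.posSemidef_conjTranspose_mul_self SA'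
      rwa [hSA'p.1, hSA'sq] at h
    · apply QB.qps_iff_chi_psd.mpr
      have h := Matrix.posSemidef_conjTranspose_mul_self SC'
      rwa [hSC'p.1, hSC'sq] at h
    · exact QB.qps_iff_chi_psd.mpr (hSAc ▸ hSA'p)
    · exact QB.qps_iff_chi_psd.mpr (hSCc ▸ hSC'p)
    · exact QB.chi_inj _ _ (by rw [QB.chi_mul, hSAc, hSA'sq])
    · exact QB.chi_inj _ _ (by rw [QB.chi_mul, hSCc, hSC'sq])
    · intro y
      unfold qVecNorm
      apply Real.sqrt_le_sqrt
      have h := hcontr' (QB.phi y)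
      rw [← hGc, QB.mulVec_phi, QB.sum_normSq_phi, QB.sum_normSq_phi] at h
      exact h
    · refine QB.chi_inj _ _ ?_
      rw [hfact', QB.chi_mul, QB.chi_mul, hSAc, hSCc, hGc]
  · rintro ⟨⟨hA, hC⟩, SA, SC, G, hSAq, hSCq, hSA2, hSC2, hGcon, hBfact⟩
    apply QB.qps_iff_chi_psd.mpr
    rw [QB.chi_fromBlocks]
    apply (Matrix.posSemidef_submatrix_equiv (QB.shuf (Fin t) (Fin u))).mpr
    have hS1 := QB.qps_iff_chi_psd.mp hSAq
    have hS2 := QB.qps_iff_chi_psd.mp hSCq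
    have hGc : ∀ z : (Fin u ⊕ Fin u) → ℂ,
        ∑ i, Complex.normSq ((QB.chi G *ᵥ z) i) ≤ ∑ i, Complex.normSq (z i) := by
      intro z
      obtain ⟨y, rfl⟩ := QB.phi_surjective z
      rw [QB.mulVec_phi, QB.sum_normSq_phi, QB.sum_normSq_phi]
      have h := hGcon y
      unfold qVecNorm at h
      have h1 : (0:ℝ) ≤ ∑ i, ‖(G *ᵥ y) i‖^2 := by positivity
      calc ∑ i, ‖(G *ᵥ y) i‖^2 = (Real.sqrt (∑ i, ‖(G *ᵥ y) i‖^2))^2 := (Real.sq_sqrt h1).symm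
        _ ≤ (Real.sqrt (∑ i, ‖y i‖^2))^2 :=
            pow_le_pow_left₀ (Real.sqrt_nonneg _) h 2
        _ = ∑ i, ‖y i‖^2 := Real.sq_sqrt (by positivity)
    have e1 : QB.chi A = QB.chi SA * QB.chi SA := by rw [← hSA2, QB.chi_mul]
    have e2 : QB.chi B = QB.chi SA * QB.chi G * QB.chi SC := by
      rw [hBfact, QB.chi_mul, QB.chi_mul]
    have e3 : QB.chi C = QB.chi SC * QB.chi SC := by rw [← hSC2, QB.chi_mul]
    have he : Matrix.fromBlocks (QB.chi A) (QB.chi B) (QB.chi Bᴴ) (QB.chi C)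
        = Matrix.fromBlocks (QB.chi SA * QB.chi SA) (QB.chi SA * QB.chi G * QB.chi SC)
            (QB.chi SA * QB.chi G * QB.chi SC)ᴴ (QB.chi SC * QB.chi SC) := by
      rw [QB.chi_conjTranspose, e1, e2, e3]
    rw [he]
    exact QB.complex_reverse (QB.chi G) hS1 hS2 hGc
end
end

section
/- (Positive semidefinite completion over the quaternions.) Let A ∈ ℍ^{a×a}, C ∈ ℍ^{c×c}, E ∈ ℍ^{e×e}, B ∈ ℍ^{a×c}, D ∈ ℍ^{c×e}. If the block matrices [[A, B],[B*, C]] and [[C, D],[D*, E]] are positive semidefinite, then there exists X ∈ ℍ^{a×e} such that the block matrix [[A, B, X],[B*, C, D],[X*, D*, E]] ∈ ℍ^{(a+c+e)×(a+c+e)} is positive semidefinite. -/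
noncomputable section

open MeasureTheory Matrix
open scoped ComplexOrder

/- ===== auxiliary lemmas for the completion theorem ===== -/

section QCompletionAux

lemma qstar_sum_elim {α β : Type*} (u : α → Hq) (v : β → Hq) :
    star (Sum.elim u v) = Sum.elim (star u) (star v) := by
  funext i; cases i <;> rfl

lemma qpi_star_smul {α : Type*} (t : ℝ) (w : α → Hq) : star (t • w) = t • star w :=
  funext fun i => Quaternion.star_smul t (w i)

lemma qsmul_re (r : ℝ) (q : Hq) : (r • q).re = r * q.re := rfl

lemma qstar_re (q : Hq) : (star q).re = q.re := by simp

lemma qre_le_norm (q : Hq) : q.re ≤ ‖q‖ := by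
  nlinarith [Quaternion.normSq_eq_norm_mul_self q, Quaternion.normSq_def' q,
    norm_nonneg q, sq_nonneg q.imI, sq_nonneg q.imJ, sq_nonneg q.imK]

variable {m : Type*} [Fintype m] [DecidableEq m]

lemma qstar_qf (M : Matrix m m Hq) (h : M.conjTranspose = M) (x : m → Hq) :
    star (star x ⬝ᵥ M *ᵥ x) = star x ⬝ᵥ M *ᵥ x := by
  have h1 : star (star x ⬝ᵥ M *ᵥ x) = star (M *ᵥ x) ⬝ᵥ star (star x) := by
    rw [star_dotProduct_star]
  rw [h1, star_star, star_mulVec, h, ← dotProduct_mulVec]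

lemma qre_dot_conjT {p q : Type*} [Fintype p] [Fintype q]
    (Y : Matrix p q Hq) (x₁ : p → Hq) (x₃ : q → Hq) :
    (star x₃ ⬝ᵥ Y.conjTranspose *ᵥ x₁).re = (star x₁ ⬝ᵥ Y *ᵥ x₃).re := by
  have h1 : star (star x₁ ⬝ᵥ Y *ᵥ x₃) = star x₃ ⬝ᵥ Y.conjTranspose *ᵥ x₁ := by
    have h2 : star (star x₁ ⬝ᵥ Y *ᵥ x₃) = star (Y *ᵥ x₃) ⬝ᵥ star (star x₁) := by
      rw [star_dotProduct_star]
    rw [h2, star_star, star_mulVec, ← dotProduct_mulVec]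
  rw [← h1, qstar_re]

lemma qre_star_dot {M : Matrix m m Hq} (hM : M.conjTranspose = M) (u w : m → Hq) :
    (star w ⬝ᵥ M *ᵥ u).re = (star u ⬝ᵥ M *ᵥ w).re := by
  have h1 : star (star u ⬝ᵥ M *ᵥ w) = star w ⬝ᵥ M *ᵥ u := by
    have h2 : star (star u ⬝ᵥ M *ᵥ w) = star (M *ᵥ w) ⬝ᵥ star (star u) := by
      rw [star_dotProduct_star]
    rw [h2, star_star, star_mulVec, hM, ← dotProduct_mulVec]
  rw [← h1, qstar_re]

lemma qPosSemidef_iff (M : Matrix m m Hq) :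
    QPosSemidef M ↔ M.conjTranspose = M ∧ ∀ x, 0 ≤ (star x ⬝ᵥ M *ᵥ x).re := by
  constructor
  · rintro ⟨hH, hx⟩
    refine ⟨hH, fun x => ?_⟩
    obtain ⟨c, hc, hcx⟩ := hx x
    have : (star x ⬝ᵥ M *ᵥ x).re = c := by rw [hcx]; simp
    rw [this]; exact hc
  · rintro ⟨hH, hx⟩
    refine ⟨hH, fun x => ⟨(star x ⬝ᵥ M *ᵥ x).re, hx x, ?_⟩⟩
    have := qstar_qf M hH x
    rw [Quaternion.star_eq_self] at this
    exact this

lemma qstar_dot_self_re (x : m → Hq) :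
    (star x ⬝ᵥ x) = ((∑ i, Quaternion.normSq (x i) : ℝ) : Hq) := by
  simp only [dotProduct, Pi.star_apply, Quaternion.star_mul_self]
  rw [show ((∑ i, Quaternion.normSq (x i) : ℝ) : Hq)
      = algebraMap ℝ Hq (∑ i, Quaternion.normSq (x i)) from rfl, map_sum]
  rfl

lemma qstar_dot_self_nonneg (x : m → Hq) : 0 ≤ (star x ⬝ᵥ x).re := by
  rw [qstar_dot_self_re]
  simp only [Quaternion.re_coe]
  exact Finset.sum_nonneg fun i _ => Quaternion.normSq_nonneg

lemma qstar_dot_self_eq_zero (x : m → Hq) (h : (star x ⬝ᵥ x).re = 0) : x = 0 := by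
  rw [qstar_dot_self_re] at h
  simp only [Quaternion.re_coe] at h
  have := (Finset.sum_eq_zero_iff_of_nonneg (fun i _ => Quaternion.normSq_nonneg)).mp h
  funext i
  exact Quaternion.normSq_eq_zero.mp (this i (Finset.mem_univ i))

lemma qNmat_mulVec (C : Matrix m m Hq) (ε : ℝ) (y : m → Hq) :
    (C + ε • (1 : Matrix m m Hq)) *ᵥ y = C *ᵥ y + ε • y := by
  rw [Matrix.add_mulVec, Matrix.smul_mulVec, Matrix.one_mulVec]

lemma qqf_Nmat (C : Matrix m m Hq) (ε : ℝ) (y : m → Hq) :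
    star y ⬝ᵥ (C + ε • (1 : Matrix m m Hq)) *ᵥ y
      = star y ⬝ᵥ C *ᵥ y + ε • (star y ⬝ᵥ y) := by
  rw [qNmat_mulVec, dotProduct_add, dotProduct_smul]

lemma qNmat_conjTranspose (C : Matrix m m Hq) (ε : ℝ) (hC : C.conjTranspose = C) :
    (C + ε • (1 : Matrix m m Hq)).conjTranspose = C + ε • (1 : Matrix m m Hq) := by
  rw [Matrix.conjTranspose_add, hC]
  congr 1
  refine Matrix.ext fun i j => ?_
  simp only [Matrix.conjTranspose_apply, Matrix.smul_apply, Quaternion.star_smul]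
  congr 1
  simp [Matrix.one_apply, eq_comm]
  split <;> simp [*]

lemma qcauchy_schwarz (M : Matrix m m Hq) (hM : M.conjTranspose = M)
    (hpos : ∀ t, 0 ≤ (star t ⬝ᵥ M *ᵥ t).re) (u w : m → Hq) :
    ((star u ⬝ᵥ M *ᵥ w).re) ^ 2 ≤ (star u ⬝ᵥ M *ᵥ u).re * (star w ⬝ᵥ M *ᵥ w).re := by
  set qu := (star u ⬝ᵥ M *ᵥ u).re
  set qw := (star w ⬝ᵥ M *ᵥ w).re
  set r := (star u ⬝ᵥ M *ᵥ w).re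
  have key : ∀ t : ℝ, 0 ≤ qw * (t * t) + (2 * r) * t + qu := by
    intro t
    have h0 := hpos (u + t • w)
    have hexp : star (u + t • w) ⬝ᵥ M *ᵥ (u + t • w)
        = (star u ⬝ᵥ M *ᵥ u) + t • (star u ⬝ᵥ M *ᵥ w) + t • (star w ⬝ᵥ M *ᵥ u)
          + (t * t) • (star w ⬝ᵥ M *ᵥ w) := by
      simp only [star_add, qpi_star_smul, Matrix.mulVec_add, Matrix.mulVec_smul,
        add_dotProduct, smul_dotProduct, dotProduct_add, dotProduct_smul, smul_add, smul_smul]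
      abel
    rw [hexp] at h0
    simp only [Quaternion.re_add, qsmul_re] at h0
    have hre : (star w ⬝ᵥ M *ᵥ u).re = r := qre_star_dot hM u w
    rw [hre] at h0
    nlinarith [h0]
  have hd := discrim_le_zero key
  rw [discrim] at hd
  nlinarith [hd]

lemma qexists_inverse [DecidableEq m] (N : Matrix m m Hq)
    (hinj : Function.Injective (N.mulVec)) :
    ∃ N' : Matrix m m Hq, N * N' = 1 ∧ N' * N = 1 := by
  let f : (m → Hq) →ₗ[ℝ] (m → Hq) :=
    { toFun := fun x => N *ᵥ x
      map_add' := fun x y => Matrix.mulVec_add N x y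
      map_smul' := fun r x => by simp [Matrix.mulVec_smul] }
  have hsurj : Function.Surjective f := LinearMap.injective_iff_surjective.mp hinj
  set g := Function.surjInv hsurj with hg
  let N' : Matrix m m Hq := Matrix.of fun i j => g (Pi.single j 1) i
  have hNN' : N * N' = 1 := by
    refine Matrix.ext fun i j => ?_
    have h1 : (fun k => N' k j) = g (Pi.single j 1) := rfl
    have h2 : (N * N') i j = (N *ᵥ (fun k => N' k j)) i := by
      simp [Matrix.mul_apply, Matrix.mulVec, dotProduct]
    rw [h2, h1]
    have h3 : N *ᵥ g (Pi.single j 1) = Pi.single j 1 :=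
      Function.surjInv_eq hsurj (Pi.single j 1)
    rw [h3]
    simp [Matrix.one_apply, Pi.single_apply]
  have hN'N : N' * N = 1 := by
    have key : N * (N' * N) = N := by
      rw [← Matrix.mul_assoc, hNN', Matrix.one_mul]
    refine Matrix.ext fun i j => ?_
    have hcol : N *ᵥ (fun k => (N' * N) k j) = N *ᵥ (fun k => (1 : Matrix m m Hq) k j) := by
      have e1 : N *ᵥ (fun k => (N' * N) k j) = fun i => (N * (N' * N)) i j := by
        funext i; simp [Matrix.mul_apply, Matrix.mulVec, dotProduct]
      have e2 : N *ᵥ (fun k => (1 : Matrix m m Hq) k j)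
          = fun i => (N * (1 : Matrix m m Hq)) i j := by
        funext i; simp [Matrix.mul_apply, Matrix.mulVec, dotProduct]
      rw [e1, e2, key, Matrix.mul_one]
    exact congrFun (hinj hcol) i
  exact ⟨N', hNN', hN'N⟩

lemma qinverse_herm (N N' : Matrix m m Hq) (hNh : N.conjTranspose = N)
    (hNN' : N * N' = 1) : N'.conjTranspose = N' := by
  have h1 : N'.conjTranspose * N = 1 := by
    rw [← hNh, ← Matrix.conjTranspose_mul, hNN', Matrix.conjTranspose_one]
  calc N'.conjTranspose = N'.conjTranspose * (N * N') := by rw [hNN', Matrix.mul_one]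
    _ = (N'.conjTranspose * N) * N' := by rw [Matrix.mul_assoc]
    _ = N' := by rw [h1, Matrix.one_mul]

end QCompletionAux

section QCompletionBlocks

lemma qqf_two {m n : Type*} [Fintype m] [Fintype n]
    (P : Matrix m m Hq) (Q : Matrix m n Hq) (R : Matrix n m Hq) (S : Matrix n n Hq)
    (y : m → Hq) (z : n → Hq) :
    star (Sum.elim y z) ⬝ᵥ (Matrix.fromBlocks P Q R S) *ᵥ (Sum.elim y z)
    = (star y ⬝ᵥ P *ᵥ y) + (star y ⬝ᵥ Q *ᵥ z) + (star z ⬝ᵥ R *ᵥ y) + (star z ⬝ᵥ S *ᵥ z) := by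
  rw [qstar_sum_elim, Matrix.fromBlocks_mulVec]
  simp only [Sum.elim_comp_inl, Sum.elim_comp_inr, sumElim_dotProduct_sumElim,
    dotProduct_add]
  abel

variable {a c e : ℕ}

lemma qqf_three (A : Matrix (Fin a) (Fin a) Hq) (C : Matrix (Fin c) (Fin c) Hq)
    (E : Matrix (Fin e) (Fin e) Hq) (B : Matrix (Fin a) (Fin c) Hq)
    (D : Matrix (Fin c) (Fin e) Hq) (X : Matrix (Fin a) (Fin e) Hq)
    (x₁ : Fin a → Hq) (x₂ : Fin c → Hq) (x₃ : Fin e → Hq) :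
    star (Sum.elim (Sum.elim x₁ x₂) x₃) ⬝ᵥ
      (Matrix.fromBlocks (Matrix.fromBlocks A B B.conjTranspose C)
        (Matrix.fromRows X D)
        (Matrix.fromCols X.conjTranspose D.conjTranspose) E) *ᵥ
      (Sum.elim (Sum.elim x₁ x₂) x₃)
    = (star x₁ ⬝ᵥ A *ᵥ x₁) + (star x₁ ⬝ᵥ B *ᵥ x₂) + (star x₂ ⬝ᵥ B.conjTranspose *ᵥ x₁)
      + (star x₂ ⬝ᵥ C *ᵥ x₂) + (star x₂ ⬝ᵥ D *ᵥ x₃) + (star x₃ ⬝ᵥ D.conjTranspose *ᵥ x₂)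
      + (star x₃ ⬝ᵥ E *ᵥ x₃)
      + (star x₁ ⬝ᵥ X *ᵥ x₃) + (star x₃ ⬝ᵥ X.conjTranspose *ᵥ x₁) := by
  rw [Matrix.fromBlocks_mulVec]
  simp only [Sum.elim_comp_inl, Sum.elim_comp_inr, qstar_sum_elim,
    sumElim_dotProduct_sumElim, Matrix.fromBlocks_mulVec,
    Matrix.fromRows_mulVec, Matrix.fromCols_mulVec_sumElim, dotProduct_add,
    sumElim_dotProduct_sumElim]
  abel

lemma qassembly_identity
    (A : Matrix (Fin a) (Fin a) Hq) (E : Matrix (Fin e) (Fin e) Hq)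
    (B : Matrix (Fin a) (Fin c) Hq) (D : Matrix (Fin c) (Fin e) Hq)
    (N N' : Matrix (Fin c) (Fin c) Hq) (ε : ℝ)
    (hNN' : N * N' = 1) (hN'N : N' * N = 1) (hN'h : N'.conjTranspose = N')
    (x₁ : Fin a → Hq) (x₂ : Fin c → Hq) (x₃ : Fin e → Hq) :
    star (Sum.elim (Sum.elim x₁ x₂) x₃) ⬝ᵥ
      (Matrix.fromBlocks
        (Matrix.fromBlocks A B B.conjTranspose (N - ε • (1 : Matrix (Fin c) (Fin c) Hq)))
        (Matrix.fromRows (B * N' * D) D)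
        (Matrix.fromCols (B * N' * D).conjTranspose D.conjTranspose) E) *ᵥ
      (Sum.elim (Sum.elim x₁ x₂) x₃)
    + ε • (star x₂ ⬝ᵥ x₂)
    =
    (star (x₂ + N' *ᵥ (B.conjTranspose *ᵥ x₁ + D *ᵥ x₃)) ⬝ᵥ
        N *ᵥ (x₂ + N' *ᵥ (B.conjTranspose *ᵥ x₁ + D *ᵥ x₃)))
    + (star (Sum.elim x₁ (-(N' *ᵥ (B.conjTranspose *ᵥ x₁)))) ⬝ᵥ
        (Matrix.fromBlocks A B B.conjTranspose (N - ε • (1 : Matrix (Fin c) (Fin c) Hq))) *ᵥ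
        (Sum.elim x₁ (-(N' *ᵥ (B.conjTranspose *ᵥ x₁))))
       + ε • (star (N' *ᵥ (B.conjTranspose *ᵥ x₁)) ⬝ᵥ (N' *ᵥ (B.conjTranspose *ᵥ x₁))))
    + (star (Sum.elim (-(N' *ᵥ (D *ᵥ x₃))) x₃) ⬝ᵥ
        (Matrix.fromBlocks (N - ε • (1 : Matrix (Fin c) (Fin c) Hq)) D D.conjTranspose E) *ᵥ
        (Sum.elim (-(N' *ᵥ (D *ᵥ x₃))) x₃)
       + ε • (star (N' *ᵥ (D *ᵥ x₃)) ⬝ᵥ (N' *ᵥ (D *ᵥ x₃)))) := by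
  have hc1 : ∀ {p : ℕ} (t : Matrix (Fin c) (Fin p) Hq), N * (N' * t) = t := fun t => by
    rw [← Matrix.mul_assoc, hNN', Matrix.one_mul]
  have hc2 : ∀ {p : ℕ} (t : Matrix (Fin c) (Fin p) Hq), N' * (N * t) = t := fun t => by
    rw [← Matrix.mul_assoc, hN'N, Matrix.one_mul]
  have hsub : ∀ (t : Fin c → Hq), (N - ε • (1 : Matrix (Fin c) (Fin c) Hq)) *ᵥ t
      = N *ᵥ t - ε • t := fun t => by
    rw [Matrix.sub_mulVec, Matrix.smul_mulVec, Matrix.one_mulVec]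
  rw [qqf_three, qqf_two, qqf_two]
  simp only [hsub, star_add, star_neg, qpi_star_smul, add_dotProduct, neg_dotProduct,
    smul_dotProduct, dotProduct_add, dotProduct_neg, dotProduct_smul, dotProduct_sub,
    sub_dotProduct, Matrix.mulVec_add, Matrix.mulVec_neg, Matrix.mulVec_smul,
    Matrix.star_mulVec, Matrix.conjTranspose_mul, Matrix.conjTranspose_conjTranspose, hN'h,
    ← Matrix.dotProduct_mulVec, Matrix.mulVec_mulVec, Matrix.mul_assoc, hc1, hc2,
    hNN', hN'N, Matrix.one_mulVec, Matrix.mul_one, Matrix.one_mul, smul_add, smul_sub,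
    smul_smul]
  module

lemma qS1_identity
    (A : Matrix (Fin a) (Fin a) Hq) (B : Matrix (Fin a) (Fin c) Hq)
    (N N' : Matrix (Fin c) (Fin c) Hq) (ε : ℝ)
    (hNN' : N * N' = 1) (hN'N : N' * N = 1) (hN'h : N'.conjTranspose = N')
    (y : Fin a → Hq) :
    star (Sum.elim y (-(N' *ᵥ (B.conjTranspose *ᵥ y)))) ⬝ᵥ
      (Matrix.fromBlocks A B B.conjTranspose (N - ε • (1 : Matrix (Fin c) (Fin c) Hq))) *ᵥ
      (Sum.elim y (-(N' *ᵥ (B.conjTranspose *ᵥ y))))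
    + ε • (star (N' *ᵥ (B.conjTranspose *ᵥ y)) ⬝ᵥ (N' *ᵥ (B.conjTranspose *ᵥ y)))
    = star y ⬝ᵥ A *ᵥ y
      - star (B.conjTranspose *ᵥ y) ⬝ᵥ (N' *ᵥ (B.conjTranspose *ᵥ y)) := by
  have hc1 : ∀ {p : ℕ} (t : Matrix (Fin c) (Fin p) Hq), N * (N' * t) = t := fun t => by
    rw [← Matrix.mul_assoc, hNN', Matrix.one_mul]
  have hc2 : ∀ {p : ℕ} (t : Matrix (Fin c) (Fin p) Hq), N' * (N * t) = t := fun t => by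
    rw [← Matrix.mul_assoc, hN'N, Matrix.one_mul]
  have hsub : ∀ (t : Fin c → Hq), (N - ε • (1 : Matrix (Fin c) (Fin c) Hq)) *ᵥ t
      = N *ᵥ t - ε • t := fun t => by
    rw [Matrix.sub_mulVec, Matrix.smul_mulVec, Matrix.one_mulVec]
  rw [qqf_two]
  simp only [hsub, star_add, star_neg, qpi_star_smul, add_dotProduct, neg_dotProduct,
    smul_dotProduct, dotProduct_add, dotProduct_neg, dotProduct_smul, dotProduct_sub,
    sub_dotProduct, Matrix.mulVec_add, Matrix.mulVec_neg, Matrix.mulVec_smul,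
    Matrix.star_mulVec, Matrix.conjTranspose_mul, Matrix.conjTranspose_conjTranspose, hN'h,
    ← Matrix.dotProduct_mulVec, Matrix.mulVec_mulVec, Matrix.mul_assoc, hc1, hc2,
    hNN', hN'N, Matrix.one_mulVec, Matrix.mul_one, Matrix.one_mul, smul_add, smul_sub,
    smul_smul]
  module

lemma qS2_identity
    (E : Matrix (Fin e) (Fin e) Hq) (D : Matrix (Fin c) (Fin e) Hq)
    (N N' : Matrix (Fin c) (Fin c) Hq) (ε : ℝ)
    (hNN' : N * N' = 1) (hN'N : N' * N = 1) (hN'h : N'.conjTranspose = N')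
    (x₃ : Fin e → Hq) :
    star (Sum.elim (-(N' *ᵥ (D *ᵥ x₃))) x₃) ⬝ᵥ
      (Matrix.fromBlocks (N - ε • (1 : Matrix (Fin c) (Fin c) Hq)) D D.conjTranspose E) *ᵥ
      (Sum.elim (-(N' *ᵥ (D *ᵥ x₃))) x₃)
    + ε • (star (N' *ᵥ (D *ᵥ x₃)) ⬝ᵥ (N' *ᵥ (D *ᵥ x₃)))
    = star x₃ ⬝ᵥ E *ᵥ x₃ - star (D *ᵥ x₃) ⬝ᵥ (N' *ᵥ (D *ᵥ x₃)) := by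
  have hc1 : ∀ {p : ℕ} (t : Matrix (Fin c) (Fin p) Hq), N * (N' * t) = t := fun t => by
    rw [← Matrix.mul_assoc, hNN', Matrix.one_mul]
  have hc2 : ∀ {p : ℕ} (t : Matrix (Fin c) (Fin p) Hq), N' * (N * t) = t := fun t => by
    rw [← Matrix.mul_assoc, hN'N, Matrix.one_mul]
  have hsub : ∀ (t : Fin c → Hq), (N - ε • (1 : Matrix (Fin c) (Fin c) Hq)) *ᵥ t
      = N *ᵥ t - ε • t := fun t => by
    rw [Matrix.sub_mulVec, Matrix.smul_mulVec, Matrix.one_mulVec]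
  rw [qqf_two]
  simp only [hsub, star_add, star_neg, qpi_star_smul, add_dotProduct, neg_dotProduct,
    smul_dotProduct, dotProduct_add, dotProduct_neg, dotProduct_smul, dotProduct_sub,
    sub_dotProduct, Matrix.mulVec_add, Matrix.mulVec_neg, Matrix.mulVec_smul,
    Matrix.star_mulVec, Matrix.conjTranspose_mul, Matrix.conjTranspose_conjTranspose, hN'h,
    ← Matrix.dotProduct_mulVec, Matrix.mulVec_mulVec, Matrix.mul_assoc, hc1, hc2,
    hNN', hN'N, Matrix.one_mulVec, Matrix.mul_one, Matrix.one_mul, smul_add, smul_sub,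
    smul_smul]
  module

lemma qentry_bound
    (A : Matrix (Fin a) (Fin a) Hq) (E : Matrix (Fin e) (Fin e) Hq)
    (B : Matrix (Fin a) (Fin c) Hq) (D : Matrix (Fin c) (Fin e) Hq)
    (N' : Matrix (Fin c) (Fin c) Hq)
    (hN'h : N'.conjTranspose = N')
    (hpos : ∀ t, 0 ≤ (star t ⬝ᵥ N' *ᵥ t).re)
    (hA : ∀ y : Fin a → Hq,
      (star (B.conjTranspose *ᵥ y) ⬝ᵥ N' *ᵥ (B.conjTranspose *ᵥ y)).re
        ≤ (star y ⬝ᵥ A *ᵥ y).re)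
    (hE : ∀ t : Fin e → Hq,
      (star (D *ᵥ t) ⬝ᵥ N' *ᵥ (D *ᵥ t)).re ≤ (star t ⬝ᵥ E *ᵥ t).re)
    (i : Fin a) (k : Fin e) :
    ‖(B * N' * D) i k‖ ^ 2 ≤ ‖A i i‖ * ‖E k k‖ := by
  rcases eq_or_ne ((B * N' * D) i k) 0 with h0 | h0
  · simp [h0]
    positivity
  set Xik := (B * N' * D) i k with hXik
  set y : Fin a → Hq := Pi.single i 1 with hy
  set t : Hq := (‖Xik‖)⁻¹ • star Xik with ht
  set x₃ : Fin e → Hq := Pi.single k t with hx₃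
  have hsy : star y = Pi.single i (1 : Hq) := by
    funext j; rw [hy]; by_cases h : j = i <;> simp [Pi.single_apply, h]
  have hsx₃ : star x₃ = Pi.single k (star t) := by
    funext j; rw [hx₃]; simp [Pi.single_apply]; split <;> simp
  have hCS := qcauchy_schwarz N' hN'h hpos (B.conjTranspose *ᵥ y) (D *ᵥ x₃)
  have hdot : star (B.conjTranspose *ᵥ y) ⬝ᵥ N' *ᵥ (D *ᵥ x₃) = Xik * t := by
    rw [Matrix.star_mulVec, Matrix.conjTranspose_conjTranspose, ← Matrix.dotProduct_mulVec,
      Matrix.mulVec_mulVec, Matrix.mulVec_mulVec, hsy, hx₃]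
    rw [Matrix.mulVec_single, single_dotProduct]
    simp [hXik]
  have hre : (Xik * t).re = ‖Xik‖ := by
    rw [ht, mul_smul_comm, Quaternion.self_mul_star, qsmul_re]
    have h5 : (((Quaternion.normSq Xik : ℝ)) : Hq).re = Quaternion.normSq Xik := rfl
    rw [h5, Quaternion.normSq_eq_norm_mul_self]
    rw [inv_mul_eq_div, mul_div_assoc, div_self (norm_ne_zero_iff.mpr h0), mul_one]
  have hAii : star y ⬝ᵥ A *ᵥ y = A i i := by
    rw [hsy, single_dotProduct, hy, Matrix.mulVec_single]
    simp
  have hEkk : star x₃ ⬝ᵥ E *ᵥ x₃ = star t * (E k k * t) := by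
    rw [hsx₃, single_dotProduct, hx₃, Matrix.mulVec_single]
    rfl
  have hnt : ‖t‖ = 1 := by
    rw [ht, norm_smul, norm_star]
    rw [Real.norm_eq_abs, abs_of_nonneg (inv_nonneg.mpr (norm_nonneg Xik))]
    exact inv_mul_cancel₀ (norm_ne_zero_iff.mpr h0)
  have hEbound : (star t * (E k k * t)).re ≤ ‖E k k‖ := by
    calc (star t * (E k k * t)).re ≤ ‖star t * (E k k * t)‖ := qre_le_norm _
    _ = ‖E k k‖ := by rw [norm_mul, norm_mul, norm_star, hnt]; ring
  have hAbound : (A i i).re ≤ ‖A i i‖ := qre_le_norm _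
  have h1 := hA y
  have h2 := hE x₃
  rw [hAii] at h1
  rw [hEkk] at h2
  rw [hdot, hre] at hCS
  have hq1 := hpos (B.conjTranspose *ᵥ y)
  have hq2 := hpos (D *ᵥ x₃)
  nlinarith [hCS, h1, h2, hq1, hq2, hAbound, hEbound]

end QCompletionBlocks

/-- positive semidefinite completion over the quaternions. -/
theorem quaternionic_posSemidef_completion {a c e : ℕ}
    (A : Matrix (Fin a) (Fin a) Hq) (C : Matrix (Fin c) (Fin c) Hq)
    (E : Matrix (Fin e) (Fin e) Hq)
    (B : Matrix (Fin a) (Fin c) Hq) (D : Matrix (Fin c) (Fin e) Hq)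
    (h1 : QPosSemidef (Matrix.fromBlocks A B B.conjTranspose C))
    (h2 : QPosSemidef (Matrix.fromBlocks C D D.conjTranspose E)) :
    ∃ X : Matrix (Fin a) (Fin e) Hq,
      QPosSemidef (Matrix.fromBlocks
        (Matrix.fromBlocks A B B.conjTranspose C)
        (Matrix.fromRows X D)
        (Matrix.fromCols X.conjTranspose D.conjTranspose) E) := by
  classical
  rw [qPosSemidef_iff] at h1 h2
  obtain ⟨hM1, hq1⟩ := h1
  obtain ⟨hM2, hq2⟩ := h2
  have hA : A.conjTranspose = A := by
    have := congrArg Matrix.toBlocks₁₁ hM1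
    simpa [Matrix.fromBlocks_conjTranspose, Matrix.toBlocks_fromBlocks₁₁] using this
  have hC : C.conjTranspose = C := by
    have := congrArg Matrix.toBlocks₂₂ hM1
    simpa [Matrix.fromBlocks_conjTranspose, Matrix.toBlocks_fromBlocks₂₂] using this
  have hE : E.conjTranspose = E := by
    have := congrArg Matrix.toBlocks₂₂ hM2
    simpa [Matrix.fromBlocks_conjTranspose, Matrix.toBlocks_fromBlocks₂₂] using this
  have hqC : ∀ z : Fin c → Hq, 0 ≤ (star z ⬝ᵥ C *ᵥ z).re := by
    intro z
    have h := hq1 (Sum.elim 0 z)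
    rw [qqf_two] at h
    simpa using h
  -- the per-n construction
  have step : ∀ n : ℕ, ∃ X : Matrix (Fin a) (Fin e) Hq,
      (∀ i k, ‖X i k‖ ^ 2 ≤ ‖A i i‖ * ‖E k k‖) ∧
      (∀ (x₁ : Fin a → Hq) (x₂ : Fin c → Hq) (x₃ : Fin e → Hq),
        -((1 / ((n : ℝ) + 1)) * (star x₂ ⬝ᵥ x₂).re) ≤
          (star (Sum.elim (Sum.elim x₁ x₂) x₃) ⬝ᵥ
            (Matrix.fromBlocks (Matrix.fromBlocks A B B.conjTranspose C)
              (Matrix.fromRows X D)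
              (Matrix.fromCols X.conjTranspose D.conjTranspose) E) *ᵥ
            (Sum.elim (Sum.elim x₁ x₂) x₃)).re) := by
    intro n
    set ε : ℝ := 1 / ((n : ℝ) + 1) with hε
    have hεpos : 0 < ε := by rw [hε]; positivity
    set N : Matrix (Fin c) (Fin c) Hq := C + ε • 1 with hN
    have hCeq : C = N - ε • (1 : Matrix (Fin c) (Fin c) Hq) := by
      rw [hN, add_sub_cancel_right]
    have hNherm : N.conjTranspose = N := qNmat_conjTranspose C ε hC
    have hqN : ∀ z : Fin c → Hq, 0 ≤ (star z ⬝ᵥ N *ᵥ z).re := by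
      intro z
      have h := congrArg QuaternionAlgebra.re (qqf_Nmat C ε z)
      rw [← hN] at h
      rw [h, Quaternion.re_add, qsmul_re]
      exact add_nonneg (hqC z) (mul_nonneg hεpos.le (qstar_dot_self_nonneg z))
    have hNinj : Function.Injective (N.mulVec) := by
      intro y₁ y₂ hy
      have hd : N *ᵥ (y₁ - y₂) = 0 := by rw [Matrix.mulVec_sub, hy, sub_self]
      have h0 : star (y₁ - y₂) ⬝ᵥ N *ᵥ (y₁ - y₂) = 0 := by rw [hd, dotProduct_zero]
      have h4 := qqf_Nmat C ε (y₁ - y₂)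
      rw [← hN, h0] at h4
      have h5 := congrArg QuaternionAlgebra.re h4.symm
      simp only [Quaternion.re_add, qsmul_re, Quaternion.re_zero] at h5
      have h6 : ε * (star (y₁ - y₂) ⬝ᵥ (y₁ - y₂)).re = 0 := by
        have := hqC (y₁ - y₂)
        have := mul_nonneg hεpos.le (qstar_dot_self_nonneg (y₁ - y₂))
        linarith
      have h7 : (star (y₁ - y₂) ⬝ᵥ (y₁ - y₂)).re = 0 := by
        rcases mul_eq_zero.mp h6 with h | h
        · exact absurd h hεpos.ne'
        · exact h
      exact sub_eq_zero.mp (qstar_dot_self_eq_zero _ h7)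
    obtain ⟨N', hNN', hN'N⟩ := qexists_inverse N hNinj
    have hN'h : N'.conjTranspose = N' := qinverse_herm N N' hNherm hNN'
    have hqN' : ∀ t : Fin c → Hq, 0 ≤ (star t ⬝ᵥ N' *ᵥ t).re := by
      intro t
      have key : star (N' *ᵥ t) ⬝ᵥ N *ᵥ (N' *ᵥ t) = star t ⬝ᵥ N' *ᵥ t := by
        rw [Matrix.star_mulVec, hN'h, ← Matrix.dotProduct_mulVec,
          Matrix.mulVec_mulVec, Matrix.mulVec_mulVec, hN'N, Matrix.one_mul]
      rw [← key]
      exact hqN (N' *ᵥ t)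
    -- Schur-type bounds
    have hbA : ∀ y : Fin a → Hq,
        (star (B.conjTranspose *ᵥ y) ⬝ᵥ N' *ᵥ (B.conjTranspose *ᵥ y)).re
          ≤ (star y ⬝ᵥ A *ᵥ y).re := by
      intro y
      have hid := congrArg QuaternionAlgebra.re (qS1_identity A B N N' ε hNN' hN'N hN'h y)
      simp only [Quaternion.re_add, Quaternion.re_sub, qsmul_re] at hid
      have hpos1 : 0 ≤ (star (Sum.elim y (-(N' *ᵥ (B.conjTranspose *ᵥ y)))) ⬝ᵥ
          (Matrix.fromBlocks A B B.conjTranspose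
            (N - ε • (1 : Matrix (Fin c) (Fin c) Hq))) *ᵥ
          (Sum.elim y (-(N' *ᵥ (B.conjTranspose *ᵥ y))))).re := by
        rw [← hCeq]
        exact hq1 _
      have hpos2 := mul_nonneg hεpos.le
        (qstar_dot_self_nonneg (N' *ᵥ (B.conjTranspose *ᵥ y)))
      linarith
    have hbE : ∀ t : Fin e → Hq,
        (star (D *ᵥ t) ⬝ᵥ N' *ᵥ (D *ᵥ t)).re ≤ (star t ⬝ᵥ E *ᵥ t).re := by
      intro t
      have hid := congrArg QuaternionAlgebra.re (qS2_identity E D N N' ε hNN' hN'N hN'h t)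
      simp only [Quaternion.re_add, Quaternion.re_sub, qsmul_re] at hid
      have hpos1 : 0 ≤ (star (Sum.elim (-(N' *ᵥ (D *ᵥ t))) t) ⬝ᵥ
          (Matrix.fromBlocks (N - ε • (1 : Matrix (Fin c) (Fin c) Hq)) D
            D.conjTranspose E) *ᵥ
          (Sum.elim (-(N' *ᵥ (D *ᵥ t))) t)).re := by
        rw [← hCeq]
        exact hq2 _
      have hpos2 := mul_nonneg hεpos.le (qstar_dot_self_nonneg (N' *ᵥ (D *ᵥ t)))
      linarith
    refine ⟨B * N' * D, fun i k => qentry_bound A E B D N' hN'h hqN' hbA hbE i k, ?_⟩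
    intro x₁ x₂ x₃
    have hid := congrArg QuaternionAlgebra.re
      (qassembly_identity A E B D N N' ε hNN' hN'N hN'h x₁ x₂ x₃)
    simp only [Quaternion.re_add, qsmul_re] at hid
    have ht1 := hqN (x₂ + N' *ᵥ (B.conjTranspose *ᵥ x₁ + D *ᵥ x₃))
    have ht2 : 0 ≤ (star (Sum.elim x₁ (-(N' *ᵥ (B.conjTranspose *ᵥ x₁)))) ⬝ᵥ
        (Matrix.fromBlocks A B B.conjTranspose
          (N - ε • (1 : Matrix (Fin c) (Fin c) Hq))) *ᵥ
        (Sum.elim x₁ (-(N' *ᵥ (B.conjTranspose *ᵥ x₁))))).re := by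
      rw [← hCeq]; exact hq1 _
    have ht3 : 0 ≤ (star (Sum.elim (-(N' *ᵥ (D *ᵥ x₃))) x₃) ⬝ᵥ
        (Matrix.fromBlocks (N - ε • (1 : Matrix (Fin c) (Fin c) Hq)) D
          D.conjTranspose E) *ᵥ
        (Sum.elim (-(N' *ᵥ (D *ᵥ x₃))) x₃)).re := by
      rw [← hCeq]; exact hq2 _
    have ht4 := mul_nonneg hεpos.le
      (qstar_dot_self_nonneg (N' *ᵥ (B.conjTranspose *ᵥ x₁)))
    have ht5 := mul_nonneg hεpos.le (qstar_dot_self_nonneg (N' *ᵥ (D *ᵥ x₃)))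
    rw [hCeq]
    linarith
  choose Xs hXb hXineq using step
  -- uniform bound and convergent subsequence
  set SA : ℝ := ∑ i, ‖A i i‖ with hSA
  set SE : ℝ := ∑ k, ‖E k k‖ with hSE
  have hSA0 : 0 ≤ SA := Finset.sum_nonneg fun i _ => norm_nonneg _
  have hSE0 : 0 ≤ SE := Finset.sum_nonneg fun k _ => norm_nonneg _
  set K : ℝ := Real.sqrt (SA * SE) with hK
  have hbound : ∀ n : ℕ,
      (Matrix.of.symm (Xs n) : Fin a → Fin e → Hq) ∈
        Metric.closedBall (0 : Fin a → Fin e → Hq) K := by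
    intro n
    rw [Metric.mem_closedBall, dist_zero_right]
    rw [pi_norm_le_iff_of_nonneg (Real.sqrt_nonneg _)]
    intro i
    rw [pi_norm_le_iff_of_nonneg (Real.sqrt_nonneg _)]
    intro k
    have h1 := hXb n i k
    have h2 : ‖A i i‖ ≤ SA := Finset.single_le_sum
      (fun i (_ : i ∈ Finset.univ) => norm_nonneg (A i i)) (Finset.mem_univ i)
    have h3 : ‖E k k‖ ≤ SE := Finset.single_le_sum
      (fun k (_ : k ∈ Finset.univ) => norm_nonneg (E k k)) (Finset.mem_univ k)
    have h4 : ‖Xs n i k‖ ^ 2 ≤ SA * SE := by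
      calc ‖Xs n i k‖ ^ 2 ≤ ‖A i i‖ * ‖E k k‖ := h1
      _ ≤ SA * SE := mul_le_mul h2 h3 (norm_nonneg _) hSA0
    calc ‖(Matrix.of.symm (Xs n) : Fin a → Fin e → Hq) i k‖ = ‖Xs n i k‖ := rfl
    _ = Real.sqrt (‖Xs n i k‖ ^ 2) := (Real.sqrt_sq (norm_nonneg _)).symm
    _ ≤ Real.sqrt (SA * SE) := Real.sqrt_le_sqrt h4
  obtain ⟨L, -, φ, hφ, hlim⟩ := tendsto_subseq_of_bounded
    (Metric.isBounded_closedBall (x := (0 : Fin a → Fin e → Hq)) (r := K)) hbound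
  refine ⟨Matrix.of L, ?_⟩
  rw [qPosSemidef_iff]
  constructor
  · -- hermitian
    simp only [Matrix.fromBlocks_conjTranspose,
      Matrix.conjTranspose_fromCols_eq_fromRows_conjTranspose,
      Matrix.conjTranspose_fromRows_eq_fromCols_conjTranspose,
      Matrix.conjTranspose_conjTranspose, hA, hC, hE]
  · intro x
    set x₁ : Fin a → Hq := fun i => x (Sum.inl (Sum.inl i)) with hx₁
    set x₂ : Fin c → Hq := fun i => x (Sum.inl (Sum.inr i)) with hx₂
    set x₃ : Fin e → Hq := fun i => x (Sum.inr i) with hx₃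
    have hx : x = Sum.elim (Sum.elim x₁ x₂) x₃ := by
      funext i
      rcases i with (i | i) | i <;> rfl
    rw [hx]
    -- entrywise convergence
    have hentry : ∀ i k, Filter.Tendsto (fun n => Xs (φ n) i k)
        Filter.atTop (nhds (L i k)) := by
      intro i k
      exact (tendsto_pi_nhds.mp ((tendsto_pi_nhds.mp hlim) i)) k
    have hterm : Filter.Tendsto (fun n => star x₁ ⬝ᵥ (Xs (φ n)) *ᵥ x₃)
        Filter.atTop (nhds (star x₁ ⬝ᵥ (Matrix.of L) *ᵥ x₃)) := by
      simp only [dotProduct, Matrix.mulVec]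
      apply tendsto_finset_sum
      intro i _
      apply Filter.Tendsto.const_mul
      apply tendsto_finset_sum
      intro k _
      exact (hentry i k).mul_const _
    -- value function
    have hval : ∀ (Y : Matrix (Fin a) (Fin e) Hq),
        (star (Sum.elim (Sum.elim x₁ x₂) x₃) ⬝ᵥ
          (Matrix.fromBlocks (Matrix.fromBlocks A B B.conjTranspose C)
            (Matrix.fromRows Y D)
            (Matrix.fromCols Y.conjTranspose D.conjTranspose) E) *ᵥ
          (Sum.elim (Sum.elim x₁ x₂) x₃)).re
        = ((star x₁ ⬝ᵥ A *ᵥ x₁) + (star x₁ ⬝ᵥ B *ᵥ x₂)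
            + (star x₂ ⬝ᵥ B.conjTranspose *ᵥ x₁)
            + (star x₂ ⬝ᵥ C *ᵥ x₂) + (star x₂ ⬝ᵥ D *ᵥ x₃)
            + (star x₃ ⬝ᵥ D.conjTranspose *ᵥ x₂)
            + (star x₃ ⬝ᵥ E *ᵥ x₃)).re + 2 * (star x₁ ⬝ᵥ Y *ᵥ x₃).re := by
      intro Y
      rw [qqf_three]
      simp only [Quaternion.re_add]
      rw [qre_dot_conjT Y x₁ x₃]
      ring
    have hseq : Filter.Tendsto
        (fun n => (star (Sum.elim (Sum.elim x₁ x₂) x₃) ⬝ᵥ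
          (Matrix.fromBlocks (Matrix.fromBlocks A B B.conjTranspose C)
            (Matrix.fromRows (Xs (φ n)) D)
            (Matrix.fromCols (Xs (φ n)).conjTranspose D.conjTranspose) E) *ᵥ
          (Sum.elim (Sum.elim x₁ x₂) x₃)).re)
        Filter.atTop
        (nhds ((star (Sum.elim (Sum.elim x₁ x₂) x₃) ⬝ᵥ
          (Matrix.fromBlocks (Matrix.fromBlocks A B B.conjTranspose C)
            (Matrix.fromRows (Matrix.of L) D)
            (Matrix.fromCols (Matrix.of L).conjTranspose D.conjTranspose) E) *ᵥ
          (Sum.elim (Sum.elim x₁ x₂) x₃)).re)) := by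
      simp only [hval]
      apply Filter.Tendsto.const_add
      have := (Quaternion.continuous_re.tendsto _).comp hterm
      exact this.const_mul 2
    have hlb : ∀ n : ℕ,
        -((1 / ((φ n : ℝ) + 1)) * (star x₂ ⬝ᵥ x₂).re) ≤
        (star (Sum.elim (Sum.elim x₁ x₂) x₃) ⬝ᵥ
          (Matrix.fromBlocks (Matrix.fromBlocks A B B.conjTranspose C)
            (Matrix.fromRows (Xs (φ n)) D)
            (Matrix.fromCols (Xs (φ n)).conjTranspose D.conjTranspose) E) *ᵥ
          (Sum.elim (Sum.elim x₁ x₂) x₃)).re :=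
      fun n => hXineq (φ n) x₁ x₂ x₃
    have hz : Filter.Tendsto (fun n : ℕ => -((1 / ((φ n : ℝ) + 1)) * (star x₂ ⬝ᵥ x₂).re))
        Filter.atTop (nhds 0) := by
      have ha : Filter.Tendsto (fun n : ℕ => 1 / ((n : ℝ) + 1)) Filter.atTop (nhds 0) :=
        tendsto_one_div_add_atTop_nhds_zero_nat
      have hb := ha.comp hφ.tendsto_atTop
      have hc := (hb.mul_const ((star x₂ ⬝ᵥ x₂).re)).neg
      simpa using hc
    exact le_of_tendsto_of_tendsto' hz hseq hlb
end
end
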